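/- arXiv:1905.09256 — 2 statements merged into one kernel-verified Lean document; each statement's English description precedes it below -/
import Mathlib

section
/- Let G be an X-generated group. Then F(G) is generated, as an F-inverse monoid (i.e., as an algebra under ·, ⁻¹, m and 1), by the set {(Γ_x, x_G) : x ∈ X}: the smallest subset of F(G) containing these elements and 1 and closed under multiplication, inversion and the max-operation m(Γ,g) = (Δ_g, g) is all of F(G). -/
namespace FInvPaper

universe u v w

section Generic
variable {S : Type u}

/-- The natural partial order on an inverse monoid: `a ≤ b` iff `a = b·e` for some idempotent. -/
def nle [Mul S] (a b : S) : Prop := ∃ e : S, e * e = e ∧ a = b * e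

/-- The minimum group congruence σ: `a σ b` iff `a·e = b·e` for some idempotent `e`. -/
def sigma [Mul S] (a b : S) : Prop := ∃ e : S, e * e = e ∧ a * e = b * e

/-- `m` assigns to every element the maximum element of its σ-class. -/
def IsMaxOp [Mul S] (m : S → S) : Prop :=
  ∀ a : S, sigma (m a) a ∧ ∀ b : S, sigma b a → nle b (m a)

/-- A subset of `S` which is an entire σ-class. -/
def IsSigmaClass [Mul S] (A : Set S) : Prop := ∃ a : S, A = {b : S | sigma b a}

end Generic

/-- Inverse monoids: monoids with an involution satisfying `a·a⁻¹·a = a`, `(a·b)⁻¹ = b⁻¹·a⁻¹`,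
in which all idempotents commute. -/
class InverseMonoid (S : Type u) extends Monoid S, Inv S where
  inv_inv : ∀ a : S, a⁻¹⁻¹ = a
  mul_inv_rev : ∀ a b : S, (a * b)⁻¹ = b⁻¹ * a⁻¹
  mul_inv_self_mul : ∀ a : S, a * a⁻¹ * a = a
  idem_comm : ∀ e f : S, e * e = e → f * f = f → e * f = f * e

/-- F-inverse monoids in the enriched signature `(·, ⁻¹, ᵐ, 1)`. -/
class FInverseMonoid (S : Type u) extends InverseMonoid S where
  mx : S → S
  mx_isMaxOp : IsMaxOp mx

/-- The max-operation of an F-inverse monoid. -/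
def mx {S : Type u} [FInverseMonoid S] : S → S := FInverseMonoid.mx

section InverseMonoidLemmas

variable {S : Type u} [InverseMonoid S]

lemma mul_inv_idem (a : S) : (a * a⁻¹) * (a * a⁻¹) = a * a⁻¹ := by
  conv_lhs => rw [← mul_assoc, InverseMonoid.mul_inv_self_mul]

lemma inv_mul_self_mul (a : S) : a⁻¹ * a * a⁻¹ = a⁻¹ := by
  have h := InverseMonoid.mul_inv_self_mul (a := a⁻¹)
  rwa [InverseMonoid.inv_inv] at h

lemma inv_mul_idem (a : S) : (a⁻¹ * a) * (a⁻¹ * a) = a⁻¹ * a := by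
  conv_lhs => rw [← mul_assoc, inv_mul_self_mul]

lemma idem_inv {e : S} (he : e * e = e) : e⁻¹ = e := by
  have h1 : e⁻¹ * e⁻¹ = e⁻¹ := by rw [← InverseMonoid.mul_inv_rev, he]
  have hc : e * e⁻¹ = e⁻¹ * e := InverseMonoid.idem_comm e e⁻¹ he h1
  have h2 : e = e * e⁻¹ := by
    calc e = e * e⁻¹ * e := (InverseMonoid.mul_inv_self_mul e).symm
    _ = e * (e⁻¹ * e) := mul_assoc _ _ _
    _ = e * (e * e⁻¹) := by rw [hc]
    _ = e * e * e⁻¹ := (mul_assoc _ _ _).symm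
    _ = e * e⁻¹ := by rw [he]
  have h3 : e⁻¹ = e⁻¹ * e := by
    calc e⁻¹ = e⁻¹ * e * e⁻¹ := (inv_mul_self_mul e).symm
    _ = e⁻¹ * (e * e⁻¹) := mul_assoc _ _ _
    _ = e⁻¹ * (e⁻¹ * e) := by rw [hc]
    _ = e⁻¹ * e⁻¹ * e := (mul_assoc _ _ _).symm
    _ = e⁻¹ * e := by rw [h1]
  rw [h3, ← hc, ← h2]

lemma idem_mul_idem {e f : S} (he : e * e = e) (hf : f * f = f) :
    (e * f) * (e * f) = e * f := by
  calc (e * f) * (e * f) = e * (f * (e * f)) := mul_assoc _ _ _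
  _ = e * (f * e * f) := by rw [← mul_assoc f e f]
  _ = e * (e * f * f) := by rw [← InverseMonoid.idem_comm e f he hf]
  _ = e * (e * (f * f)) := by rw [mul_assoc e f f]
  _ = e * (e * f) := by rw [hf]
  _ = e * e * f := (mul_assoc _ _ _).symm
  _ = e * f := by rw [he]

lemma sigma_refl (a : S) : sigma a a := ⟨1, one_mul 1, rfl⟩

lemma sigma_symm {a b : S} (h : sigma a b) : sigma b a := by
  obtain ⟨e, he, hab⟩ := h
  exact ⟨e, he, hab.symm⟩

lemma sigma_trans {a b c : S} (h₁ : sigma a b) (h₂ : sigma b c) : sigma a c := by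
  obtain ⟨e, he, h1⟩ := h₁
  obtain ⟨f, hf, h2⟩ := h₂
  refine ⟨e * f, idem_mul_idem he hf, ?_⟩
  calc a * (e * f) = a * e * f := (mul_assoc _ _ _).symm
  _ = b * e * f := by rw [h1]
  _ = b * (e * f) := mul_assoc _ _ _
  _ = b * (f * e) := by rw [InverseMonoid.idem_comm e f he hf]
  _ = b * f * e := (mul_assoc _ _ _).symm
  _ = c * f * e := by rw [h2]
  _ = c * (f * e) := mul_assoc _ _ _
  _ = c * (e * f) := by rw [InverseMonoid.idem_comm e f he hf]

lemma sigma_mul_left {a b : S} (c : S) (h : sigma a b) : sigma (c * a) (c * b) := by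
  obtain ⟨e, he, hab⟩ := h
  exact ⟨e, he, by rw [mul_assoc, hab, ← mul_assoc]⟩

lemma inner_lemma {e : S} (he : e * e = e) (a : S) :
    a⁻¹ * (a * e * a⁻¹) = e * a⁻¹ := by
  calc a⁻¹ * (a * e * a⁻¹) = a⁻¹ * (a * e) * a⁻¹ := by rw [← mul_assoc a⁻¹ (a * e) a⁻¹]
  _ = a⁻¹ * a * e * a⁻¹ := by rw [← mul_assoc a⁻¹ a e]
  _ = e * (a⁻¹ * a) * a⁻¹ := by rw [InverseMonoid.idem_comm (a⁻¹ * a) e (inv_mul_idem a) he]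
  _ = e * (a⁻¹ * a * a⁻¹) := by rw [mul_assoc e (a⁻¹ * a) a⁻¹]
  _ = e * a⁻¹ := by rw [inv_mul_self_mul]

lemma sigma_inv {a b : S} (h : sigma a b) : sigma a⁻¹ b⁻¹ := by
  obtain ⟨e, he, hab⟩ := h
  have key5 : e * a⁻¹ = e * b⁻¹ := by
    have h' : (a * e)⁻¹ = (b * e)⁻¹ := by rw [hab]
    rwa [InverseMonoid.mul_inv_rev, InverseMonoid.mul_inv_rev, idem_inv he] at h'
  have key1 : (a * e * a⁻¹) * (a * e * a⁻¹) = a * e * a⁻¹ := by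
    calc (a * e * a⁻¹) * (a * e * a⁻¹) = a * e * (a⁻¹ * (a * e * a⁻¹)) := mul_assoc _ _ _
    _ = a * e * (e * a⁻¹) := by rw [inner_lemma he a]
    _ = a * e * e * a⁻¹ := (mul_assoc _ _ _).symm
    _ = a * (e * e) * a⁻¹ := by rw [mul_assoc a e e]
    _ = a * e * a⁻¹ := by rw [he]
  have key3 : a * e * a⁻¹ = b * e * b⁻¹ := by
    calc a * e * a⁻¹ = a * (e * e) * a⁻¹ := by rw [he]
    _ = a * e * e * a⁻¹ := by rw [← mul_assoc a e e]
    _ = a * e * (e * a⁻¹) := mul_assoc _ _ _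
    _ = a * e * (e * b⁻¹) := by rw [key5]
    _ = b * e * (e * b⁻¹) := by rw [hab]
    _ = b * e * e * b⁻¹ := (mul_assoc _ _ _).symm
    _ = b * (e * e) * b⁻¹ := by rw [mul_assoc b e e]
    _ = b * e * b⁻¹ := by rw [he]
  refine ⟨a * e * a⁻¹, key1, ?_⟩
  rw [inner_lemma he a, key5, key3, inner_lemma he b]

lemma sigma_mul_right {a b : S} (c : S) (h : sigma a b) : sigma (a * c) (b * c) := by
  have h1 := sigma_mul_left c⁻¹ (sigma_inv h)
  have h2 := sigma_inv h1
  rwa [InverseMonoid.mul_inv_rev c⁻¹ a⁻¹, InverseMonoid.mul_inv_rev c⁻¹ b⁻¹,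
    InverseMonoid.inv_inv, InverseMonoid.inv_inv, InverseMonoid.inv_inv] at h2

instance sigmaSetoid (S : Type u) [InverseMonoid S] : Setoid S where
  r := sigma
  iseqv := ⟨sigma_refl, sigma_symm, sigma_trans⟩

/-- The maximum group quotient `S/σ`. -/
def GQuot (S : Type u) [InverseMonoid S] : Type u := Quotient (sigmaSetoid S)

/-- The σ-class of an element, as an element of the maximum group quotient. -/
def σclass {S : Type u} [InverseMonoid S] (a : S) : GQuot S := Quotient.mk (sigmaSetoid S) a

instance (S : Type u) [InverseMonoid S] : Group (GQuot S) where
  mul := Quotient.map₂ (· * ·) (fun _ _ h₁ _ _ h₂ =>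
    sigma_trans (sigma_mul_right _ h₁) (sigma_mul_left _ h₂))
  one := σclass 1
  inv := Quotient.map (·⁻¹) (fun _ _ h => sigma_inv h)
  mul_assoc := by
    intro a b c
    induction a using Quotient.ind
    induction b using Quotient.ind
    induction c using Quotient.ind
    exact congrArg (Quotient.mk _) (mul_assoc _ _ _)
  one_mul := by
    intro a
    induction a using Quotient.ind
    exact congrArg (Quotient.mk _) (one_mul _)
  mul_one := by
    intro a
    induction a using Quotient.ind
    exact congrArg (Quotient.mk _) (mul_one _)
  inv_mul_cancel := by
    intro a
    induction a using Quotient.ind with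
    | _ a =>
      refine Quotient.sound ⟨a⁻¹ * a, inv_mul_idem a, ?_⟩
      rw [one_mul]
      exact inv_mul_idem a

end InverseMonoidLemmas


section Graphs

variable {G : Type u} [Group G] {X : Type v}

/-- A subgraph of the Cayley graph `Cay(G)` of the `X`-generated group `G` (with assignment
mapping `φ : X → G`), represented by its set of vertices and its set of positive edges:
the positive edge `(g, x)` goes from `g` to `g * φ x` and carries the label `x`; every
subgraph closed under edge inversion is uniquely determined by this data. -/
structure Subgraph (φ : X → G) : Type (max u v) where
  verts : Set G
  edges : Set (G × X)
  src_mem : ∀ e ∈ edges, Prod.fst e ∈ verts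
  tgt_mem : ∀ e ∈ edges, e.1 * φ e.2 ∈ verts

namespace Subgraph

variable {φ : X → G}

lemma ext' {Γ Δ : Subgraph φ} (hv : Γ.verts = Δ.verts) (he : Γ.edges = Δ.edges) : Γ = Δ := by
  cases Γ; cases Δ; cases hv; cases he; rfl

/-- Union of subgraphs. -/
def union (Γ Δ : Subgraph φ) : Subgraph φ where
  verts := Γ.verts ∪ Δ.verts
  edges := Γ.edges ∪ Δ.edges
  src_mem := by
    intro e he
    rcases he with h | h
    · exact Set.mem_union_left _ (Γ.src_mem e h)
    · exact Set.mem_union_right _ (Δ.src_mem e h)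
  tgt_mem := by
    intro e he
    rcases he with h | h
    · exact Set.mem_union_left _ (Γ.tgt_mem e h)
    · exact Set.mem_union_right _ (Δ.tgt_mem e h)

instance : Union (Subgraph φ) := ⟨union⟩

@[simp] lemma union_verts (Γ Δ : Subgraph φ) : (Γ ∪ Δ).verts = Γ.verts ∪ Δ.verts := rfl
@[simp] lemma union_edges (Γ Δ : Subgraph φ) : (Γ ∪ Δ).edges = Γ.edges ∪ Δ.edges := rfl

/-- Left translation of a subgraph by a group element. -/
def smul (g : G) (Γ : Subgraph φ) : Subgraph φ where
  verts := (g * ·) '' Γ.verts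
  edges := (fun e => (g * e.1, e.2)) '' Γ.edges
  src_mem := by
    rintro e ⟨e', he', rfl⟩
    exact ⟨e'.1, Γ.src_mem e' he', rfl⟩
  tgt_mem := by
    rintro e ⟨e', he', rfl⟩
    exact ⟨e'.1 * φ e'.2, Γ.tgt_mem e' he', (mul_assoc g e'.1 (φ e'.2)).symm⟩

instance : SMul G (Subgraph φ) := ⟨smul⟩

@[simp] lemma smul_verts (g : G) (Γ : Subgraph φ) : (g • Γ).verts = (g * ·) '' Γ.verts := rfl
@[simp] lemma smul_edges (g : G) (Γ : Subgraph φ) :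
    (g • Γ).edges = (fun e : G × X => (g * e.1, e.2)) '' Γ.edges := rfl

/-- The subgraph relation. -/
instance : HasSubset (Subgraph φ) := ⟨fun Γ Δ => Γ.verts ⊆ Δ.verts ∧ Γ.edges ⊆ Δ.edges⟩

lemma subset_iff (Γ Δ : Subgraph φ) : Γ ⊆ Δ ↔ Γ.verts ⊆ Δ.verts ∧ Γ.edges ⊆ Δ.edges := Iff.rfl

/-- Finiteness of a subgraph. -/
def IsFinite (Γ : Subgraph φ) : Prop := Γ.verts.Finite ∧ Γ.edges.Finite

/-- A subgraph has no isolated vertices if each of its vertices is an endpoint of one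
of its edges. -/
def NoIsolated (Γ : Subgraph φ) : Prop :=
  ∀ v ∈ Γ.verts, ∃ e ∈ Γ.edges, v = e.1 ∨ v = e.1 * φ e.2

/-- `Ed(Γ)`: the subgraph spanned by the edges of `Γ`, i.e. `Γ` with all isolated vertices
removed. -/
def ed (Γ : Subgraph φ) : Subgraph φ where
  verts := {v | ∃ e ∈ Γ.edges, v = e.1 ∨ v = e.1 * φ e.2}
  edges := Γ.edges
  src_mem := fun e he => ⟨e, he, Or.inl rfl⟩
  tgt_mem := fun e he => ⟨e, he, Or.inr rfl⟩

lemma ed_finite {Γ : Subgraph φ} (h : Γ.IsFinite) : Γ.ed.IsFinite := by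
  constructor
  · have hsub : Γ.ed.verts ⊆
        (fun e : G × X => e.1) '' Γ.edges ∪ (fun e : G × X => e.1 * φ e.2) '' Γ.edges := by
      rintro v ⟨e, he, rfl | rfl⟩
      · exact Set.mem_union_left _ ⟨e, he, rfl⟩
      · exact Set.mem_union_right _ ⟨e, he, rfl⟩
    exact ((h.2.image _).union (h.2.image _)).subset hsub
  · exact h.2

lemma ed_noIsolated (Γ : Subgraph φ) : Γ.ed.NoIsolated := fun _ hv => hv

end Subgraph

open Subgraph

variable {φ : X → G}

/-- The subgraph with the single vertex `g` and no edges. -/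
def vertexG (φ : X → G) (g : G) : Subgraph φ :=
  ⟨{g}, ∅, by simp, by simp⟩

/-- `Δ_g`: the edgeless subgraph with vertices `1` and `g`. -/
def deltaG (φ : X → G) (g : G) : Subgraph φ :=
  ⟨{1, g}, ∅, by simp, by simp⟩

/-- The subgraph spanned by a single (positive) edge. -/
def edgeG (φ : X → G) (e : G × X) : Subgraph φ where
  verts := {e.1, e.1 * φ e.2}
  edges := {e}
  src_mem := by
    intro e' he'
    rw [Set.mem_singleton_iff] at he'
    subst he'
    exact Set.mem_insert _ _
  tgt_mem := by
    intro e' he'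
    rw [Set.mem_singleton_iff] at he'
    subst he'
    exact Set.mem_insert_of_mem _ rfl

/-- The empty subgraph. -/
def emptyG (φ : X → G) : Subgraph φ := ⟨∅, ∅, by simp, by simp⟩

lemma edgeG_noIsolated (φ : X → G) (e : G × X) : (edgeG φ e).NoIsolated := by
  intro v hv
  refine ⟨e, Set.mem_singleton e, ?_⟩
  simpa [edgeG] using hv

/-- Two vertices are adjacent in `Γ` if they are connected by an edge of `Γ`. -/
def adj (Γ : Subgraph φ) (u v : G) : Prop :=
  ∃ e ∈ Γ.edges, (u = e.1 ∧ v = e.1 * φ e.2) ∨ (v = e.1 ∧ u = e.1 * φ e.2)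

/-- A subgraph is connected if any two of its vertices are joined by a path running in it. -/
def Connected (Γ : Subgraph φ) : Prop :=
  ∀ u ∈ Γ.verts, ∀ v ∈ Γ.verts, Relation.ReflTransGen (adj Γ) u v

lemma adj_mono {Γ Δ : Subgraph φ} (h : Γ.edges ⊆ Δ.edges) {u v : G} (ha : adj Γ u v) :
    adj Δ u v := by
  obtain ⟨e, he, hc⟩ := ha
  exact ⟨e, h he, hc⟩

lemma Connected.union {Γ Δ : Subgraph φ} (hΓ : Connected Γ) (hΔ : Connected Δ) (w : G)
    (hw₁ : w ∈ Γ.verts) (hw₂ : w ∈ Δ.verts) : Connected (Γ ∪ Δ) := by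
  have hsΓ : Γ.edges ⊆ (Γ ∪ Δ).edges := by
    rw [union_edges]; exact Set.subset_union_left
  have hsΔ : Δ.edges ⊆ (Γ ∪ Δ).edges := by
    rw [union_edges]; exact Set.subset_union_right
  have mΓ : ∀ {p q : G}, Relation.ReflTransGen (adj Γ) p q →
      Relation.ReflTransGen (adj (Γ ∪ Δ)) p q :=
    fun h => Relation.ReflTransGen.mono (fun _ _ h' => adj_mono hsΓ h') _ _ h
  have mΔ : ∀ {p q : G}, Relation.ReflTransGen (adj Δ) p q →
      Relation.ReflTransGen (adj (Γ ∪ Δ)) p q :=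
    fun h => Relation.ReflTransGen.mono (fun _ _ h' => adj_mono hsΔ h') _ _ h
  intro u hu v hv
  rw [union_verts] at hu hv
  rcases hu with hu | hu <;> rcases hv with hv | hv
  · exact mΓ (hΓ u hu v hv)
  · exact (mΓ (hΓ u hu w hw₁)).trans (mΔ (hΔ w hw₂ v hv))
  · exact (mΔ (hΔ u hu w hw₂)).trans (mΓ (hΓ w hw₁ v hv))
  · exact mΔ (hΔ u hu v hv)

lemma Connected.smul {Γ : Subgraph φ} (g : G) (h : Connected Γ) : Connected (g • Γ) := by
  intro u hu v hv
  rw [smul_verts] at hu hv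
  obtain ⟨u', hu', rfl⟩ := hu
  obtain ⟨v', hv', rfl⟩ := hv
  refine Relation.ReflTransGen.lift (fun z => g * z) ?_ _ _ (h u' hu' v' hv')
  rintro p q ⟨e, he, hc⟩
  show adj (g • Γ) (g * p) (g * q)
  refine ⟨(g * e.1, e.2), ?_, ?_⟩
  · rw [smul_edges]; exact ⟨e, he, rfl⟩
  · rcases hc with ⟨rfl, rfl⟩ | ⟨rfl, rfl⟩
    · exact Or.inl ⟨rfl, (mul_assoc _ _ _).symm⟩
    · exact Or.inr ⟨rfl, (mul_assoc _ _ _).symm⟩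

lemma Subgraph.NoIsolated.union {Γ Δ : Subgraph φ} (hΓ : Γ.NoIsolated) (hΔ : Δ.NoIsolated) :
    (Γ ∪ Δ).NoIsolated := by
  intro v hv
  rw [union_verts] at hv
  rcases hv with hv | hv
  · obtain ⟨e, he, hor⟩ := hΓ v hv
    exact ⟨e, by rw [union_edges]; exact Set.mem_union_left _ he, hor⟩
  · obtain ⟨e, he, hor⟩ := hΔ v hv
    exact ⟨e, by rw [union_edges]; exact Set.mem_union_right _ he, hor⟩

lemma Subgraph.NoIsolated.smul {Γ : Subgraph φ} (g : G) (h : Γ.NoIsolated) :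
    (g • Γ).NoIsolated := by
  intro v hv
  rw [smul_verts] at hv
  obtain ⟨u, hu, rfl⟩ := hv
  obtain ⟨e, he, hor⟩ := h u hu
  refine ⟨(g * e.1, e.2), by rw [smul_edges]; exact ⟨e, he, rfl⟩, ?_⟩
  rcases hor with rfl | rfl
  · exact Or.inl rfl
  · exact Or.inr (mul_assoc _ _ _).symm

end Graphs


section Expansions

variable {G : Type u} [Group G] {X : Type v} {φ : X → G}

open Subgraph

/-- `F(G)`: pairs `(Γ, g)` where `Γ` is a finite subgraph of `Cay(G)` having `1` and `g`
among its vertices. -/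
structure FExp (φ : X → G) : Type (max u v) where
  graph : Subgraph φ
  elt : G
  finite : graph.IsFinite
  one_mem : (1 : G) ∈ graph.verts
  elt_mem : elt ∈ graph.verts

namespace FExp

lemma ext' {a b : FExp φ} (hg : a.graph = b.graph) (he : a.elt = b.elt) : a = b := by
  cases a; cases b; cases hg; cases he; rfl

instance : Mul (FExp φ) :=
  ⟨fun a b =>
    { graph := a.graph ∪ a.elt • b.graph
      elt := a.elt * b.elt
      finite := ⟨by
          rw [union_verts, smul_verts]
          exact a.finite.1.union (b.finite.1.image _),
        by
          rw [union_edges, smul_edges]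
          exact a.finite.2.union (b.finite.2.image _)⟩
      one_mem := by
        rw [union_verts]
        exact Set.mem_union_left _ a.one_mem
      elt_mem := by
        rw [union_verts]
        refine Set.mem_union_right _ ?_
        rw [smul_verts]
        exact ⟨b.elt, b.elt_mem, rfl⟩ }⟩

@[simp] lemma mul_graph (a b : FExp φ) : (a * b).graph = a.graph ∪ a.elt • b.graph := rfl
@[simp] lemma mul_elt (a b : FExp φ) : (a * b).elt = a.elt * b.elt := rfl

instance : One (FExp φ) :=
  ⟨{ graph := deltaG φ 1
     elt := 1
     finite := ⟨(Set.finite_singleton (1 : G)).insert 1, Set.finite_empty⟩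
     one_mem := Set.mem_insert 1 _
     elt_mem := Set.mem_insert 1 _ }⟩

@[simp] lemma one_graph : (1 : FExp φ).graph = deltaG φ 1 := rfl
@[simp] lemma one_elt : (1 : FExp φ).elt = 1 := rfl

instance : Inv (FExp φ) :=
  ⟨fun a =>
    { graph := a.elt⁻¹ • a.graph
      elt := a.elt⁻¹
      finite := ⟨by rw [smul_verts]; exact a.finite.1.image _,
        by rw [smul_edges]; exact a.finite.2.image _⟩
      one_mem := by
        rw [smul_verts]
        exact ⟨a.elt, a.elt_mem, inv_mul_cancel a.elt⟩
      elt_mem := by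
        rw [smul_verts]
        exact ⟨1, a.one_mem, mul_one _⟩ }⟩

@[simp] lemma inv_graph (a : FExp φ) : (a⁻¹).graph = a.elt⁻¹ • a.graph := rfl
@[simp] lemma inv_elt (a : FExp φ) : (a⁻¹).elt = a.elt⁻¹ := rfl

end FExp

/-- The element `(Δ_g, g)` of `F(G)`. -/
def maxElt (φ : X → G) (g : G) : FExp φ where
  graph := deltaG φ g
  elt := g
  finite := ⟨(Set.finite_singleton g).insert 1, Set.finite_empty⟩
  one_mem := Set.mem_insert 1 _
  elt_mem := Set.mem_insert_of_mem _ rfl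

/-- The max-operation `(Γ, g) ↦ (Δ_g, g)` on `F(G)`. -/
def mxOp (a : FExp φ) : FExp φ := maxElt φ a.elt

/-- The generator `(Γ_x, x_G)` of `F(G)`. -/
def genElt (φ : X → G) (x : X) : FExp φ where
  graph := edgeG φ (1, x)
  elt := φ x
  finite := ⟨(Set.finite_singleton _).insert _, Set.finite_singleton _⟩
  one_mem := Set.mem_insert 1 _
  elt_mem := by simp [edgeG]

/-- `M(G)`: the Margolis–Meakin expansion; pairs `(Γ, g)` where `Γ` is a finite *connected*
subgraph of `Cay(G)` having `1` and `g` among its vertices. -/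
structure MExp (φ : X → G) : Type (max u v) where
  graph : Subgraph φ
  elt : G
  finite : graph.IsFinite
  connected : Connected graph
  one_mem : (1 : G) ∈ graph.verts
  elt_mem : elt ∈ graph.verts

namespace MExp

instance : Mul (MExp φ) :=
  ⟨fun a b =>
    { graph := a.graph ∪ a.elt • b.graph
      elt := a.elt * b.elt
      finite := ⟨by
          rw [union_verts, smul_verts]
          exact a.finite.1.union (b.finite.1.image _),
        by
          rw [union_edges, smul_edges]
          exact a.finite.2.union (b.finite.2.image _)⟩
      connected := by
        refine Connected.union a.connected (Connected.smul a.elt b.connected) a.elt a.elt_mem ?_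
        rw [smul_verts]
        exact ⟨1, b.one_mem, mul_one _⟩
      one_mem := by
        rw [union_verts]
        exact Set.mem_union_left _ a.one_mem
      elt_mem := by
        rw [union_verts]
        refine Set.mem_union_right _ ?_
        rw [smul_verts]
        exact ⟨b.elt, b.elt_mem, rfl⟩ }⟩

end MExp

/-- `P(G)`: pairs `(Γ, g)` where `Γ` is a finite subgraph of `Cay(G)` without isolated
vertices and `g ∈ G` (a model of the semidirect product of the semilattice of such
subgraphs by `G`). -/
structure PExp (φ : X → G) : Type (max u v) where
  graph : Subgraph φ
  elt : G
  finite : graph.IsFinite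
  noIsolated : graph.NoIsolated

namespace PExp

lemma ext' {a b : PExp φ} (hg : a.graph = b.graph) (he : a.elt = b.elt) : a = b := by
  cases a; cases b; cases hg; cases he; rfl

instance : Mul (PExp φ) :=
  ⟨fun a b =>
    { graph := a.graph ∪ a.elt • b.graph
      elt := a.elt * b.elt
      finite := ⟨by
          rw [union_verts, smul_verts]
          exact a.finite.1.union (b.finite.1.image _),
        by
          rw [union_edges, smul_edges]
          exact a.finite.2.union (b.finite.2.image _)⟩
      noIsolated := a.noIsolated.union (b.noIsolated.smul a.elt) }⟩

@[simp] lemma mul_graph (a b : PExp φ) : (a * b).graph = a.graph ∪ a.elt • b.graph := rfl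
@[simp] lemma mul_elt (a b : PExp φ) : (a * b).elt = a.elt * b.elt := rfl

instance : One (PExp φ) :=
  ⟨{ graph := emptyG φ
     elt := 1
     finite := ⟨Set.finite_empty, Set.finite_empty⟩
     noIsolated := by intro v hv; simp [emptyG] at hv }⟩

@[simp] lemma one_graph : (1 : PExp φ).graph = emptyG φ := rfl
@[simp] lemma one_elt : (1 : PExp φ).elt = 1 := rfl

instance : Inv (PExp φ) :=
  ⟨fun a =>
    { graph := a.elt⁻¹ • a.graph
      elt := a.elt⁻¹
      finite := ⟨by rw [smul_verts]; exact a.finite.1.image _,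
        by rw [smul_edges]; exact a.finite.2.image _⟩
      noIsolated := a.noIsolated.smul _ }⟩

@[simp] lemma inv_graph (a : PExp φ) : (a⁻¹).graph = a.elt⁻¹ • a.graph := rfl
@[simp] lemma inv_elt (a : PExp φ) : (a⁻¹).elt = a.elt⁻¹ := rfl

end PExp

/-- The max-operation `(Γ, g) ↦ (∅, g)` on `P(G)`. -/
def pMax (a : PExp φ) : PExp φ where
  graph := emptyG φ
  elt := a.elt
  finite := ⟨Set.finite_empty, Set.finite_empty⟩
  noIsolated := by intro v hv; simp [emptyG] at hv

/-- The generator `(Γ_x, x_G)` of `P(G)`. -/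
def genEltP (φ : X → G) (x : X) : PExp φ where
  graph := edgeG φ (1, x)
  elt := φ x
  finite := ⟨(Set.finite_singleton _).insert _, Set.finite_singleton _⟩
  noIsolated := edgeG_noIsolated φ (1, x)

/-- The canonical map `F(G) → P(G)`, `(Γ, g) ↦ (Ed(Γ), g)`. -/
def edMap (a : FExp φ) : PExp φ where
  graph := a.graph.ed
  elt := a.elt
  finite := ed_finite a.finite
  noIsolated := a.graph.ed_noIsolated

/-- The relation `θ` on `F(G)`: `(Γ,g) θ (Ξ,h)` iff `g = h` and `Ed(Γ) = Ed(Ξ)`. -/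
def thetaRel (φ : X → G) (a b : FExp φ) : Prop := a.elt = b.elt ∧ a.graph.ed = b.graph.ed

end Expansions

section Terms

variable {X : Type v}

/-- Terms of the term algebra `I^m_X` in their (unique) normal form
`u₀ · m(v₁) · u₁ ⋯ u_{n-1} · m(vₙ) · uₙ` with `uᵢ, vⱼ` words in the free monoid with
involution `I_X` on `X` (represented as lists over `X ⊕ X`, where `inl x` stands for `x`
and `inr x` for `x⁻¹`): the first component is `u₀`, and the second lists the pairs
`(vᵢ, uᵢ)`. -/
abbrev MTerm (X : Type v) := List (X ⊕ X) × List (List (X ⊕ X) × List (X ⊕ X))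

/-- Value of a letter of `X ⊔ X⁻¹`. -/
def letterVal {M : Type w} [Monoid M] [Inv M] (f : X → M) : X ⊕ X → M
  | Sum.inl x => f x
  | Sum.inr x => (f x)⁻¹

/-- Value of a word of `I_X`. -/
def wordVal {M : Type w} [Monoid M] [Inv M] (f : X → M) (u : List (X ⊕ X)) : M :=
  (u.map (letterVal f)).prod

/-- Value `[t]` of a term `t ∈ I^m_X` under the assignment `f` of the generators,
where `mop` is interpreted as the operation `m`. -/
def termVal {M : Type w} [Monoid M] [Inv M] (f : X → M) (mop : M → M) (t : MTerm X) : M :=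
  wordVal f t.1 * (t.2.map (fun p => mop (wordVal f p.1) * wordVal f p.2)).prod

end Terms

section Journeys

variable {G : Type u} [Group G] {X : Type v}

/-- The subgraph of `Cay(G)` spanned by the path starting at `g` with label the given word;
for the empty word it is the single vertex `g`. -/
def pathGraph (φ : X → G) : G → List (X ⊕ X) → Subgraph φ
  | g, [] => vertexG φ g
  | g, Sum.inl x :: u => edgeG φ (g, x) ∪ pathGraph φ (g * φ x) u
  | g, Sum.inr x :: u => edgeG φ (g * (φ x)⁻¹, x) ∪ pathGraph φ (g * (φ x)⁻¹) u

/-- The subgraph of `Cay(G)` spanned by the journey `j_g(w)` induced by the term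
`w = u₀ · m(v₁) · u₁ ⋯ · m(vₙ) · uₙ` starting at `g`: traverse the path labelled `u₀`
from `g`, jump to `g·[u₀v₁]`, traverse the path labelled `u₁`, and so on. -/
def journeyGraph (φ : X → G) : G → List (X ⊕ X) → List (List (X ⊕ X) × List (X ⊕ X)) →
    Subgraph φ
  | g, u, [] => pathGraph φ g u
  | g, u, (v, u') :: rest =>
      pathGraph φ g u ∪ journeyGraph φ (g * wordVal φ u * wordVal φ v) u' rest

end Journeys

/-- For an `X`-generated group `G`, the expansion `F(G)` is generated, as an
F-inverse monoid (an algebra under `·`, `⁻¹`, `m` and `1`), by the elements `(Γ_x, x_G)`: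
the smallest subset containing these elements and `1` and closed under multiplication,
inversion and the max-operation `m(Γ,g) = (Δ_g,g)` is all of `F(G)`. -/
theorem statement9 {G : Type u} [Group G] {X : Type v} (φ : X → G)
    (hφ : Subgroup.closure (Set.range φ) = ⊤) :
    ∀ T : Set (FExp φ),
      (∀ x : X, genElt φ x ∈ T) →
      (1 : FExp φ) ∈ T →
      (∀ a ∈ T, ∀ b ∈ T, a * b ∈ T) →
      (∀ a ∈ T, a⁻¹ ∈ T) →
      (∀ a ∈ T, mxOp a ∈ T) →
      ∀ a : FExp φ, a ∈ T := by
  intro T hgen h1T hmulT hinvT hmxT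
  have hH : ∀ g : G, ∃ a ∈ T, a.elt = g := by
    let H : Subgroup G :=
      { carrier := {g | ∃ a ∈ T, a.elt = g}
        one_mem' := ⟨1, h1T, rfl⟩
        mul_mem' := by
          rintro x y ⟨a, ha, rfl⟩ ⟨b, hb, rfl⟩
          exact ⟨a * b, hmulT a ha b hb, rfl⟩
        inv_mem' := by
          rintro x ⟨a, ha, rfl⟩
          exact ⟨a⁻¹, hinvT a ha, rfl⟩ }
    have hle : Subgroup.closure (Set.range φ) ≤ H := by
      rw [Subgroup.closure_le]
      rintro _ ⟨x, rfl⟩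
      exact ⟨genElt φ x, hgen x, rfl⟩
    intro g
    rw [hφ] at hle
    exact hle (Subgroup.mem_top g)
  have hmax : ∀ g : G, maxElt φ g ∈ T := by
    intro g
    obtain ⟨a, ha, hae⟩ := hH g
    have h := hmxT a ha
    rwa [show mxOp a = maxElt φ g by rw [mxOp, hae]] at h
  -- edgeless idempotents are in T
  have hvert : ∀ (V : Set G), V.Finite → ∀ a : FExp φ, a.elt = 1 →
      a.graph.edges = ∅ → a.graph.verts = insert 1 V → a ∈ T := by
    intro V hV
    refine Set.Finite.induction_on (motive := fun V _ => ∀ a : FExp φ, a.elt = 1 →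
        a.graph.edges = ∅ → a.graph.verts = insert 1 V → a ∈ T) V hV ?_ ?_
    · intro a he hE hv
      have ha1 : a = 1 := by
        refine FExp.ext' (Subgraph.ext' ?_ ?_) he
        · rw [hv, FExp.one_graph]
          ext z
          simp [deltaG]
        · rw [hE, FExp.one_graph]
          rfl
      rw [ha1]; exact h1T
    · intro v V' hvV' hV' IH a he hE hv
      let a' : FExp φ :=
        ⟨⟨insert 1 V', ∅, by simp, by simp⟩, 1, ⟨hV'.insert 1, Set.finite_empty⟩,
          Set.mem_insert _ _, Set.mem_insert _ _⟩
      have ha' : a' ∈ T := IH a' rfl rfl rfl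
      have hb : maxElt φ v * (maxElt φ v)⁻¹ ∈ T := hmulT _ (hmax v) _ (hinvT _ (hmax v))
      have heq : a = maxElt φ v * (maxElt φ v)⁻¹ * a' := by
        refine FExp.ext' (Subgraph.ext' ?_ ?_) ?_
        · rw [hv]
          ext z
          simp [maxElt, deltaG, a', Set.image_insert_eq, Set.image_singleton]
          tauto
        · rw [hE]
          ext z
          simp [maxElt, deltaG, a']
        · simp [he, a']
      rw [heq]
      exact hmulT _ hb _ ha'
  -- all idempotents are in T
  have hidem : ∀ a : FExp φ, a.elt = 1 → a ∈ T := by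
    have key : ∀ (E : Set (G × X)), E.Finite → ∀ a : FExp φ, a.elt = 1 →
        a.graph.edges = E → a ∈ T := by
      intro E hE
      refine Set.Finite.induction_on (motive := fun E _ => ∀ a : FExp φ, a.elt = 1 →
          a.graph.edges = E → a ∈ T) E hE ?_ ?_
      · intro a he hE0
        exact hvert a.graph.verts a.finite.1 a he hE0
          (Set.insert_eq_self.mpr a.one_mem).symm
      · intro e E' heE' hE' IH a he hEa
        have hesrc : e ∈ a.graph.edges := by rw [hEa]; exact Set.mem_insert _ _
        have h1v : e.1 ∈ a.graph.verts := a.graph.src_mem e hesrc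
        have h2v : e.1 * φ e.2 ∈ a.graph.verts := a.graph.tgt_mem e hesrc
        let a' : FExp φ :=
          ⟨⟨a.graph.verts, E',
            fun f hf => a.graph.src_mem f (by rw [hEa]; exact Set.mem_insert_of_mem _ hf),
            fun f hf => a.graph.tgt_mem f (by rw [hEa]; exact Set.mem_insert_of_mem _ hf)⟩,
            1, ⟨a.finite.1, hE'⟩, a.one_mem, a.one_mem⟩
        have ha' : a' ∈ T := IH a' rfl rfl
        have hb : maxElt φ e.1 * genElt φ e.2 * (genElt φ e.2)⁻¹ * maxElt φ e.1⁻¹ ∈ T :=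
          hmulT _ (hmulT _ (hmulT _ (hmax e.1) _ (hgen e.2)) _ (hinvT _ (hgen e.2))) _
            (hmax e.1⁻¹)
        have heq : a = a' *
            (maxElt φ e.1 * genElt φ e.2 * (genElt φ e.2)⁻¹ * maxElt φ e.1⁻¹) := by
          refine FExp.ext' (Subgraph.ext' ?_ ?_) ?_
          · ext z
            simp only [FExp.mul_graph, Subgraph.union_verts, Subgraph.smul_verts,
              Set.image_union, Set.image_image, Set.mem_union]
            simp [maxElt, deltaG, genElt, edgeG, a', Set.image_insert_eq,
              Set.image_singleton, mul_assoc]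
            have hkey : ∀ w, e.1⁻¹ * z = w → z = e.1 * w := fun w hw => by
              rw [← hw, mul_inv_cancel_left]
            rintro (((rfl | rfl) | rfl | rfl) | hz | rfl)
            · exact a.one_mem
            · exact h1v
            · exact h1v
            · exact h2v
            · rw [hkey _ hz, mul_one]; exact h1v
            · exact a.one_mem
          · rw [hEa]
            ext f
            simp only [FExp.mul_graph, Subgraph.union_edges, Subgraph.smul_edges,
              Set.image_union, Set.image_image, Set.mem_union]
            simp [maxElt, deltaG, genElt, edgeG, a', Set.image_insert_eq,
              Set.image_singleton]
            constructor
            · rintro (rfl | hf) <;> tauto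
            · rintro (hf | rfl) <;> simp_all
          · simp [he, a', maxElt, genElt, mul_assoc]
        rw [heq]
        exact hmulT _ ha' _ hb
    intro a he
    exact key a.graph.edges a.finite.2 a he rfl
  intro a
  let a₀ : FExp φ := ⟨a.graph, 1, a.finite, a.one_mem, a.one_mem⟩
  have ha₀ : a₀ ∈ T := hidem a₀ rfl
  have heq : a = a₀ * maxElt φ a.elt := by
    refine FExp.ext' (Subgraph.ext' ?_ ?_) ?_
    · show a.graph.verts = a.graph.verts ∪ _
      refine (Set.union_eq_self_of_subset_right ?_).symm
      rintro z hz
      simp [maxElt, deltaG, a₀] at hz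
      rcases hz with rfl | rfl
      · exact a.one_mem
      · exact a.elt_mem
    · ext f
      simp [maxElt, deltaG, a₀]
    · simp [a₀, maxElt]
  rw [heq]
  exact hmulT _ ha₀ _ (hmax a.elt)

end FInvPaper
end

section
/- Let G be an X-generated group, and let F be an X-generated F-inverse monoid such that there is a canonical morphism ν : G → F/σ (i.e., ν is a group morphism with ν(x_G) equal to the σ-class of x_F for all x ∈ X). If s, t ∈ I^m_X are terms such that [s]_G = [t]_G (so that the journeys j₁(s) and j₁(t) are co-terminal) and the subgraph of Cay(G) spanned by j₁(s) contains the subgraph spanned by j₁(t), then [s]_F ≤ [t]_F in the natural partial order of F. -/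
namespace FInvPaper

universe u v w

/-! ### Auxiliary development for Statement 12 -/

section Aux12

open Subgraph

/-! #### More inverse monoid lemmas -/

section MoreInv
variable {S : Type*} [InverseMonoid S]

lemma im_inv_one : (1 : S)⁻¹ = 1 := by
  have h := InverseMonoid.mul_inv_self_mul (1 : S)
  rwa [one_mul, mul_one] at h

lemma conj_idem (a : S) {e : S} (he : e * e = e) :
    a * e * a⁻¹ * (a * e * a⁻¹) = a * e * a⁻¹ := by
  calc a * e * a⁻¹ * (a * e * a⁻¹)
      = a * e * (a⁻¹ * (a * e * a⁻¹)) := by rw [mul_assoc]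
    _ = a * e * (e * a⁻¹) := by rw [inner_lemma he]
    _ = a * e * e * a⁻¹ := by rw [← mul_assoc]
    _ = a * (e * e) * a⁻¹ := by rw [mul_assoc a e e]
    _ = a * e * a⁻¹ := by rw [he]

lemma nle_eq {a b : S} (h : nle a b) : a = b * (a⁻¹ * a) := by
  obtain ⟨e, he, rfl⟩ := h
  have h1 : (b * e)⁻¹ * (b * e) = b⁻¹ * b * e := by
    rw [InverseMonoid.mul_inv_rev, idem_inv he]
    calc e * b⁻¹ * (b * e)
        = e * (b⁻¹ * b) * e := by
          rw [mul_assoc e b⁻¹ (b * e), ← mul_assoc b⁻¹ b e, ← mul_assoc]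
      _ = b⁻¹ * b * e * e := by
          rw [InverseMonoid.idem_comm e (b⁻¹ * b) he (inv_mul_idem b)]
      _ = b⁻¹ * b * (e * e) := by rw [mul_assoc]
      _ = b⁻¹ * b * e := by rw [he]
  rw [h1, ← mul_assoc, ← mul_assoc, InverseMonoid.mul_inv_self_mul]

lemma nle_antisymm {a b : S} (h1 : nle a b) (h2 : nle b a) : a = b := by
  obtain ⟨e, he, hae⟩ := h1
  obtain ⟨f, hf, hbf⟩ := h2
  have hfe : a = a * (f * e) := by rw [← mul_assoc, ← hbf, ← hae]
  have key : f * e * f = f * e := by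
    calc f * e * f = e * f * f := by rw [InverseMonoid.idem_comm f e hf he]
      _ = e * (f * f) := by rw [mul_assoc]
      _ = e * f := by rw [hf]
      _ = f * e := by rw [InverseMonoid.idem_comm e f he hf]
  calc a = a * (f * e) := hfe
    _ = a * (f * e * f) := by rw [key]
    _ = a * (f * e) * f := by rw [← mul_assoc]
    _ = a * f := by rw [← hfe]
    _ = b := hbf.symm

lemma nle_inv {a b : S} (h : nle a b) : nle a⁻¹ b⁻¹ := by
  obtain ⟨e, he, rfl⟩ := h
  refine ⟨b * e * b⁻¹, conj_idem b he, ?_⟩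
  rw [InverseMonoid.mul_inv_rev, idem_inv he, inner_lemma he]

lemma mul_idem_pull (a : S) {e : S} (he : e * e = e) : a * e = a * e * a⁻¹ * a := by
  calc a * e = a * a⁻¹ * a * e := by rw [InverseMonoid.mul_inv_self_mul]
    _ = a * ((a⁻¹ * a) * e) := by rw [mul_assoc a a⁻¹ a, mul_assoc]
    _ = a * (e * (a⁻¹ * a)) := by
        rw [InverseMonoid.idem_comm (a⁻¹ * a) e (inv_mul_idem a) he]
    _ = a * e * (a⁻¹ * a) := by rw [← mul_assoc]
    _ = a * e * a⁻¹ * a := by rw [← mul_assoc]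

lemma conj_mul_split (c : S) {e : S} (he : e * e = e) (y : S) :
    c * (e * y) * c⁻¹ = c * e * c⁻¹ * (c * y * c⁻¹) := by
  have h2 : c * e * c⁻¹ * (c * y * c⁻¹) = c * (e * ((c⁻¹ * c) * y)) * c⁻¹ := by
    rw [← mul_assoc (c * e * c⁻¹) (c * y) c⁻¹, mul_assoc (c * e) c⁻¹ (c * y),
        ← mul_assoc c⁻¹ c y, mul_assoc c e ((c⁻¹ * c) * y)]
  rw [h2, ← mul_assoc e (c⁻¹ * c) y,
      InverseMonoid.idem_comm e (c⁻¹ * c) he (inv_mul_idem c),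
      mul_assoc (c⁻¹ * c) e y, ← mul_assoc c (c⁻¹ * c) (e * y), ← mul_assoc c c⁻¹ c,
      InverseMonoid.mul_inv_self_mul]

lemma leConj {a c : S} (h : nle a c) {e : S} (he : e * e = e) :
    a * e * a⁻¹ = c * e * c⁻¹ * (a * a⁻¹) := by
  have hi : (a⁻¹ * a) * (a⁻¹ * a) = a⁻¹ * a := inv_mul_idem a
  have ha : a = c * (a⁻¹ * a) := nle_eq h
  have hL : a * e * a⁻¹ = c * ((a⁻¹ * a) * e) * c⁻¹ := by
    calc a * e * a⁻¹
        = (c * (a⁻¹ * a)) * e * (c * (a⁻¹ * a))⁻¹ := by conv_lhs => rw [ha]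
      _ = (c * (a⁻¹ * a)) * e * ((a⁻¹ * a) * c⁻¹) := by
          rw [InverseMonoid.mul_inv_rev c (a⁻¹ * a), idem_inv hi]
      _ = c * ((a⁻¹ * a) * (e * ((a⁻¹ * a) * c⁻¹))) := by simp only [mul_assoc]
      _ = c * ((a⁻¹ * a) * (((a⁻¹ * a) * e) * c⁻¹)) := by
          rw [← mul_assoc e (a⁻¹ * a) c⁻¹,
              InverseMonoid.idem_comm e (a⁻¹ * a) he hi]
      _ = c * (((a⁻¹ * a) * (a⁻¹ * a)) * (e * c⁻¹)) := by simp only [mul_assoc]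
      _ = c * ((a⁻¹ * a) * (e * c⁻¹)) := by rw [hi]
      _ = c * ((a⁻¹ * a) * e) * c⁻¹ := by simp only [mul_assoc]
  have haa : a * a⁻¹ = c * (a⁻¹ * a) * c⁻¹ := by
    calc a * a⁻¹ = (c * (a⁻¹ * a)) * (c * (a⁻¹ * a))⁻¹ := by conv_lhs => rw [ha]
      _ = (c * (a⁻¹ * a)) * ((a⁻¹ * a) * c⁻¹) := by
          rw [InverseMonoid.mul_inv_rev c (a⁻¹ * a), idem_inv hi]
      _ = c * (((a⁻¹ * a) * (a⁻¹ * a)) * c⁻¹) := by simp only [mul_assoc]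
      _ = c * ((a⁻¹ * a) * c⁻¹) := by rw [hi]
      _ = c * (a⁻¹ * a) * c⁻¹ := by simp only [mul_assoc]
  have hR : c * e * c⁻¹ * (a * a⁻¹) = c * ((a⁻¹ * a) * e) * c⁻¹ := by
    rw [haa]
    calc c * e * c⁻¹ * (c * (a⁻¹ * a) * c⁻¹)
        = c * ((e * (c⁻¹ * c)) * ((a⁻¹ * a) * c⁻¹)) := by simp only [mul_assoc]
      _ = c * (((c⁻¹ * c) * e) * ((a⁻¹ * a) * c⁻¹)) := by
          rw [InverseMonoid.idem_comm e (c⁻¹ * c) he (inv_mul_idem c)]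
      _ = (c * c⁻¹ * c) * (e * ((a⁻¹ * a) * c⁻¹)) := by simp only [mul_assoc]
      _ = c * (e * ((a⁻¹ * a) * c⁻¹)) := by rw [InverseMonoid.mul_inv_self_mul]
      _ = c * ((e * (a⁻¹ * a)) * c⁻¹) := by simp only [mul_assoc]
      _ = c * (((a⁻¹ * a) * e) * c⁻¹) := by
          rw [InverseMonoid.idem_comm e (a⁻¹ * a) he hi]
      _ = c * ((a⁻¹ * a) * e) * c⁻¹ := by simp only [mul_assoc]
  rw [hL, hR]

end MoreInv

/-! #### Lemmas about the max operation -/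

section MxLemmas
variable {F : Type*} [FInverseMonoid F]

lemma mx_sigma (a : F) : sigma (mx a) a := (FInverseMonoid.mx_isMaxOp a).1

lemma mx_max {a b : F} (h : sigma b a) : nle b (mx a) :=
  (FInverseMonoid.mx_isMaxOp a).2 b h

lemma mx_le (a : F) : nle a (mx a) := mx_max (sigma_refl a)

lemma mx_congr {a b : F} (h : sigma a b) : mx a = mx b :=
  nle_antisymm (mx_max (sigma_trans (mx_sigma a) h))
    (mx_max (sigma_trans (mx_sigma b) (sigma_symm h)))

lemma mx_one : mx (1 : F) = 1 := by
  have h := nle_eq (mx_le (1 : F))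
  rw [im_inv_one, one_mul, mul_one] at h
  exact h.symm

lemma mx_inv (a : F) : (mx a)⁻¹ = mx a⁻¹ := by
  have h1 : nle ((mx a)⁻¹) (mx a⁻¹) := mx_max (sigma_inv (mx_sigma a))
  have h2 : nle ((mx a⁻¹)⁻¹) (mx a) := by
    have h := sigma_inv (mx_sigma a⁻¹)
    rw [InverseMonoid.inv_inv] at h
    exact mx_max h
  have h3 : nle (mx a⁻¹) ((mx a)⁻¹) := by
    have := nle_inv h2
    rwa [InverseMonoid.inv_inv] at this
  exact nle_antisymm h1 h3

lemma σclass_mul (a b : F) : σclass (a * b) = σclass a * σclass b := rfl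

lemma σclass_inv (a : F) : σclass a⁻¹ = (σclass a)⁻¹ := rfl

lemma σclass_one : (1 : GQuot F) = σclass (1 : F) := rfl

/-- The max operation, as a map on the maximum group quotient. -/
def Mq : GQuot F → F := Quotient.lift mx (fun _ _ h => mx_congr h)

lemma Mq_mk (a : F) : Mq (σclass a) = mx a := rfl

end MxLemmas

/-! #### The canonical morphism and the associated idempotents -/

section Canon
variable {G : Type*} [Group G] {X : Type*} {F : Type*} [FInverseMonoid F]

/-- Maximum element of the σ-class `ν g`. -/
def MgV (ν : G →* GQuot F) (g : G) : F := Mq (ν g)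

/-- Vertex idempotent. -/
def PvV (ν : G →* GQuot F) (v : G) : F := MgV ν v * (MgV ν v)⁻¹

/-- Edge idempotent. -/
def QeV (ν : G →* GQuot F) (f : X → F) (e : G × X) : F :=
  MgV ν e.1 * (f e.2 * (f e.2)⁻¹) * (MgV ν e.1)⁻¹

variable (ν : G →* GQuot F) (f : X → F)

lemma σclass_Mg (g : G) : σclass (MgV ν g) = ν g := by
  obtain ⟨a, ha⟩ := Quotient.exists_rep (ν g)
  rw [MgV, ← ha]
  exact Quotient.sound (mx_sigma a)

lemma Mg_max {b : F} {g : G} (h : σclass b = ν g) : nle b (MgV ν g) := by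
  rw [MgV, ← h, Mq_mk]
  exact mx_le b

lemma Mg_one : MgV ν (1 : G) = 1 := by
  rw [MgV, map_one]
  have h : (1 : GQuot F) = σclass (1 : F) := rfl
  rw [h, Mq_mk, mx_one]

lemma Mg_inv (g : G) : (MgV ν g)⁻¹ = MgV ν g⁻¹ := by
  obtain ⟨a, ha⟩ := Quotient.exists_rep (ν g)
  have ha' : σclass a = ν g := ha
  have h2 : ν g⁻¹ = σclass a⁻¹ := by rw [map_inv, ← ha', ← σclass_inv]
  rw [MgV, MgV, ← ha', h2, Mq_mk, Mq_mk, mx_inv]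

lemma Pv_idem (v : G) : PvV ν v * PvV ν v = PvV ν v := mul_inv_idem _

lemma Qe_idem (e : G × X) : QeV ν f e * QeV ν f e = QeV ν f e :=
  conj_idem _ (mul_inv_idem _)

end Canon
/-! #### Core conjugation identities -/

section Core
variable {G : Type*} [Group G] {X : Type*} {F : Type*} [FInverseMonoid F]
variable (ν : G →* GQuot F) (f : X → F)

lemma Pv_def (v : G) : PvV (F := F) ν v = MgV ν v * (MgV ν v)⁻¹ := rfl

lemma Qe_def (e : G × X) :
    QeV ν f e = MgV ν e.1 * (f e.2 * (f e.2)⁻¹) * (MgV ν e.1)⁻¹ := rfl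

lemma Pv_one : PvV (F := F) ν (1 : G) = 1 := by
  rw [Pv_def, Mg_one, im_inv_one, one_mul]

lemma Qe_one_fst (x : X) : QeV ν f (1, x) = f x * (f x)⁻¹ := by
  rw [Qe_def, Mg_one, im_inv_one, one_mul, mul_one]

lemma Mg_mul_nle (g h : G) :
    nle (MgV (F := F) ν g * MgV ν h) (MgV ν (g * h)) := by
  apply Mg_max
  rw [σclass_mul, σclass_Mg, σclass_Mg, ← map_mul]

/-- Abstract core computation in an inverse monoid. -/
lemma core_abstract {F' : Type*} [InverseMonoid F'] {A B C : F'}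
    (hABe : A * B = C * ((A * B)⁻¹ * (A * B)))
    (e1 : C⁻¹ * A = B⁻¹ * ((C⁻¹ * A)⁻¹ * (C⁻¹ * A))) :
    A * (B * B⁻¹) * A⁻¹ = C * C⁻¹ * (A * A⁻¹) ∧
      A * B = C * C⁻¹ * (A * A⁻¹) * C := by
  have hεi : ((A * B)⁻¹ * (A * B)) * ((A * B)⁻¹ * (A * B)) = (A * B)⁻¹ * (A * B) :=
    inv_mul_idem _
  have hW : A * (B * B⁻¹) * A⁻¹ = C * ((A * B)⁻¹ * (A * B)) * C⁻¹ := by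
    calc A * (B * B⁻¹) * A⁻¹
        = (A * B) * (A * B)⁻¹ := by
          rw [InverseMonoid.mul_inv_rev A B]; simp only [mul_assoc]
      _ = (C * ((A * B)⁻¹ * (A * B))) * (C * ((A * B)⁻¹ * (A * B)))⁻¹ := by
          conv_lhs => rw [hABe]
      _ = (C * ((A * B)⁻¹ * (A * B))) * (((A * B)⁻¹ * (A * B)) * C⁻¹) := by
          rw [InverseMonoid.mul_inv_rev C ((A * B)⁻¹ * (A * B)), idem_inv hεi]
      _ = C * ((((A * B)⁻¹ * (A * B)) * ((A * B)⁻¹ * (A * B))) * C⁻¹) := by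
          simp only [mul_assoc]
      _ = C * (((A * B)⁻¹ * (A * B)) * C⁻¹) := by rw [hεi]
      _ = C * ((A * B)⁻¹ * (A * B)) * C⁻¹ := by simp only [mul_assoc]
  have hZidem : (C * C⁻¹ * (A * A⁻¹)) * (C * C⁻¹ * (A * A⁻¹)) = C * C⁻¹ * (A * A⁻¹) :=
    idem_mul_idem (mul_inv_idem C) (mul_inv_idem A)
  have step1 : C * C⁻¹ * (A * A⁻¹) = (C * B⁻¹ * A⁻¹) * (C * C⁻¹ * (A * A⁻¹)) := by
    calc C * C⁻¹ * (A * A⁻¹)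
        = C * (C⁻¹ * A) * A⁻¹ := by simp only [mul_assoc]
      _ = C * (B⁻¹ * ((C⁻¹ * A)⁻¹ * (C⁻¹ * A))) * A⁻¹ := by
          conv_lhs => rw [e1]
      _ = C * (B⁻¹ * ((A⁻¹ * C) * (C⁻¹ * A))) * A⁻¹ := by
          rw [InverseMonoid.mul_inv_rev C⁻¹ A, InverseMonoid.inv_inv]
      _ = (C * B⁻¹ * A⁻¹) * (C * (C⁻¹ * A) * A⁻¹) := by simp only [mul_assoc]
      _ = (C * B⁻¹ * A⁻¹) * (C * C⁻¹ * (A * A⁻¹)) := by simp only [mul_assoc]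
  have step2 : C * C⁻¹ * (A * A⁻¹) =
      (C * C⁻¹ * (A * A⁻¹)) * (A * (B * C⁻¹)) := by
    conv_lhs => rw [← idem_inv hZidem, step1]
    rw [InverseMonoid.mul_inv_rev (C * B⁻¹ * A⁻¹) (C * C⁻¹ * (A * A⁻¹)),
        idem_inv hZidem, InverseMonoid.mul_inv_rev (C * B⁻¹) A⁻¹, InverseMonoid.inv_inv,
        InverseMonoid.mul_inv_rev C B⁻¹, InverseMonoid.inv_inv]
  have step3 : (C * C⁻¹ * (A * A⁻¹)) * (A * (B * C⁻¹)) =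
      C * ((A * B)⁻¹ * (A * B)) * C⁻¹ := by
    calc (C * C⁻¹ * (A * A⁻¹)) * (A * (B * C⁻¹))
        = C * C⁻¹ * (A * A⁻¹ * A) * (B * C⁻¹) := by simp only [mul_assoc]
      _ = C * C⁻¹ * (A * (B * C⁻¹)) := by
          rw [InverseMonoid.mul_inv_self_mul]; simp only [mul_assoc]
      _ = C * C⁻¹ * ((A * B) * C⁻¹) := by rw [← mul_assoc A B C⁻¹]
      _ = C * C⁻¹ * ((C * ((A * B)⁻¹ * (A * B))) * C⁻¹) := by
          conv_lhs => rw [hABe]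
      _ = (C * C⁻¹ * C) * (((A * B)⁻¹ * (A * B)) * C⁻¹) := by simp only [mul_assoc]
      _ = C * (((A * B)⁻¹ * (A * B)) * C⁻¹) := by rw [InverseMonoid.mul_inv_self_mul]
      _ = C * ((A * B)⁻¹ * (A * B)) * C⁻¹ := by simp only [mul_assoc]
  have hZW : C * C⁻¹ * (A * A⁻¹) = C * ((A * B)⁻¹ * (A * B)) * C⁻¹ := step2.trans step3
  have h4 : C * ((A * B)⁻¹ * (A * B)) * C⁻¹ * C = C * ((A * B)⁻¹ * (A * B)) := by
    calc C * ((A * B)⁻¹ * (A * B)) * C⁻¹ * C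
        = C * (((A * B)⁻¹ * (A * B)) * (C⁻¹ * C)) := by simp only [mul_assoc]
      _ = C * ((C⁻¹ * C) * ((A * B)⁻¹ * (A * B))) := by
          rw [InverseMonoid.idem_comm ((A * B)⁻¹ * (A * B)) (C⁻¹ * C) hεi (inv_mul_idem C)]
      _ = (C * C⁻¹ * C) * ((A * B)⁻¹ * (A * B)) := by simp only [mul_assoc]
      _ = C * ((A * B)⁻¹ * (A * B)) := by rw [InverseMonoid.mul_inv_self_mul]
  constructor
  · rw [hW, ← hZW]
  · rw [hABe, ← h4, ← hZW]

lemma Mg_conj_Pv (g h : G) :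
    MgV (F := F) ν g * PvV ν h * (MgV ν g)⁻¹ = PvV ν (g * h) * PvV ν g := by
  have hAB : nle (MgV (F := F) ν g * MgV ν h) (MgV ν (g * h)) := Mg_mul_nle ν g h
  have hCA : nle ((MgV (F := F) ν (g * h))⁻¹ * MgV ν g) (MgV ν h)⁻¹ := by
    rw [Mg_inv ν h]
    apply Mg_max
    rw [σclass_mul, σclass_inv, σclass_Mg, σclass_Mg, ← map_inv, ← map_mul]
    congr 1
    group
  have h0 := core_abstract (nle_eq hAB) (nle_eq hCA)
  rw [Pv_def ν h, Pv_def ν (g * h), Pv_def ν g]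
  exact h0.1

lemma Mg_mul (g h : G) :
    MgV (F := F) ν g * MgV ν h = PvV ν (g * h) * PvV ν g * MgV ν (g * h) := by
  have hAB : nle (MgV (F := F) ν g * MgV ν h) (MgV ν (g * h)) := Mg_mul_nle ν g h
  have hCA : nle ((MgV (F := F) ν (g * h))⁻¹ * MgV ν g) (MgV ν h)⁻¹ := by
    rw [Mg_inv ν h]
    apply Mg_max
    rw [σclass_mul, σclass_inv, σclass_Mg, σclass_Mg, ← map_inv, ← map_mul]
    congr 1
    group
  have h0 := core_abstract (nle_eq hAB) (nle_eq hCA)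
  rw [Pv_def ν (g * h), Pv_def ν g]
  exact h0.2

lemma core_abstract2 {F' : Type*} [InverseMonoid F'] {A B C e : F'} (he : e * e = e)
    (hAB : nle (A * B) C)
    (hBB : A * (B * B⁻¹) * A⁻¹ = C * C⁻¹ * (A * A⁻¹)) :
    A * (B * e * B⁻¹) * A⁻¹ = C * e * C⁻¹ * (A * A⁻¹) := by
  have h5 : C * e * C⁻¹ * (C * C⁻¹) = C * e * C⁻¹ := by
    calc C * e * C⁻¹ * (C * C⁻¹)
        = C * (e * (C⁻¹ * C)) * C⁻¹ := by simp only [mul_assoc]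
      _ = C * ((C⁻¹ * C) * e) * C⁻¹ := by
          rw [InverseMonoid.idem_comm e (C⁻¹ * C) he (inv_mul_idem C)]
      _ = (C * C⁻¹ * C) * (e * C⁻¹) := by simp only [mul_assoc]
      _ = C * (e * C⁻¹) := by rw [InverseMonoid.mul_inv_self_mul]
      _ = C * e * C⁻¹ := by simp only [mul_assoc]
  calc A * (B * e * B⁻¹) * A⁻¹
      = (A * B) * e * (A * B)⁻¹ := by
        rw [InverseMonoid.mul_inv_rev A B]; simp only [mul_assoc]
    _ = C * e * C⁻¹ * ((A * B) * (A * B)⁻¹) := leConj hAB he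
    _ = C * e * C⁻¹ * (A * (B * B⁻¹) * A⁻¹) := by
        rw [InverseMonoid.mul_inv_rev A B]; simp only [mul_assoc]
    _ = C * e * C⁻¹ * (C * C⁻¹ * (A * A⁻¹)) := by rw [hBB]
    _ = (C * e * C⁻¹ * (C * C⁻¹)) * (A * A⁻¹) := by simp only [mul_assoc]
    _ = C * e * C⁻¹ * (A * A⁻¹) := by rw [h5]

lemma Mg_conj_Qe (g h : G) (x : X) :
    MgV ν g * QeV ν f (h, x) * (MgV ν g)⁻¹ = QeV ν f (g * h, x) * PvV ν g := by
  have hBB : MgV (F := F) ν g * (MgV ν h * (MgV ν h)⁻¹) * (MgV ν g)⁻¹ =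
      MgV ν (g * h) * (MgV ν (g * h))⁻¹ * (MgV ν g * (MgV ν g)⁻¹) := by
    have h1 := Mg_conj_Pv ν g h
    rw [Pv_def ν h, Pv_def ν (g * h), Pv_def ν g] at h1
    exact h1
  have h0 := core_abstract2 (mul_inv_idem (f x)) (Mg_mul_nle ν g h) hBB
  show MgV ν g * (MgV ν h * (f x * (f x)⁻¹) * (MgV ν h)⁻¹) * (MgV ν g)⁻¹ =
    MgV ν (g * h) * (f x * (f x)⁻¹) * (MgV ν (g * h))⁻¹ * (MgV ν g * (MgV ν g)⁻¹)
  exact h0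

lemma gen_core_a {x : X} {a : G} (hx : σclass (f x) = ν a) :
    f x = PvV ν a * (f x * (f x)⁻¹) * MgV ν a := by
  set M := MgV (F := F) ν a with hM
  have hle : nle (f x) M := Mg_max ν hx
  set e := (f x)⁻¹ * f x with he'
  have he : e * e = e := inv_mul_idem _
  have hfe : f x = M * e := nle_eq hle
  have hxx : f x * (f x)⁻¹ = M * e * M⁻¹ := by
    conv_lhs => rw [hfe]
    rw [InverseMonoid.mul_inv_rev, idem_inv he]
    simp only [mul_assoc]
    rw [← mul_assoc e e M⁻¹, he]
  have : PvV ν a * (f x * (f x)⁻¹) * MgV ν a = f x := by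
    calc PvV ν a * (f x * (f x)⁻¹) * MgV ν a
        = (M * M⁻¹) * (M * e * M⁻¹) * M := by rw [Pv_def, ← hM, hxx]
      _ = (M * M⁻¹ * M) * (e * (M⁻¹ * M)) := by simp only [mul_assoc]
      _ = M * (e * (M⁻¹ * M)) := by rw [InverseMonoid.mul_inv_self_mul]
      _ = M * ((M⁻¹ * M) * e) := by
          rw [InverseMonoid.idem_comm e (M⁻¹ * M) he (inv_mul_idem M)]
      _ = (M * M⁻¹ * M) * e := by simp only [mul_assoc]
      _ = M * e := by rw [InverseMonoid.mul_inv_self_mul]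
      _ = f x := hfe.symm
  exact this.symm

lemma gen_core_b {x : X} {a : G} (hx : σclass (f x) = ν a) :
    (f x)⁻¹ = PvV ν a⁻¹ * QeV ν f (a⁻¹, x) * MgV ν a⁻¹ := by
  set M := MgV (F := F) ν a with hM
  have hle : nle (f x) M := Mg_max ν hx
  set e := (f x)⁻¹ * f x with he'
  have he : e * e = e := inv_mul_idem _
  have hfe : f x = M * e := nle_eq hle
  have hxx : f x * (f x)⁻¹ = M * e * M⁻¹ := by
    conv_lhs => rw [hfe]
    rw [InverseMonoid.mul_inv_rev, idem_inv he]
    simp only [mul_assoc]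
    rw [← mul_assoc e e M⁻¹, he]
  have hMinv : MgV (F := F) ν a⁻¹ = M⁻¹ := by rw [hM, ← Mg_inv]
  have hfxinv : (f x)⁻¹ = e * M⁻¹ := by
    conv_lhs => rw [hfe]
    rw [InverseMonoid.mul_inv_rev, idem_inv he]
  have : PvV ν a⁻¹ * QeV ν f (a⁻¹, x) * MgV ν a⁻¹ = (f x)⁻¹ := by
    calc PvV ν a⁻¹ * QeV ν f (a⁻¹, x) * MgV ν a⁻¹
        = (M⁻¹ * M⁻¹⁻¹) * (M⁻¹ * (f x * (f x)⁻¹) * M⁻¹⁻¹) * M⁻¹ := by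
          rw [Pv_def, Qe_def, hMinv]
      _ = (M⁻¹ * M) * (M⁻¹ * (M * e * M⁻¹) * M) * M⁻¹ := by
          rw [InverseMonoid.inv_inv, hxx]
      _ = (M⁻¹ * M * M⁻¹) * (M * e * (M⁻¹ * M) * M⁻¹) := by simp only [mul_assoc]
      _ = M⁻¹ * (M * e * (M⁻¹ * M) * M⁻¹) := by rw [inv_mul_self_mul]
      _ = M⁻¹ * (M * ((M⁻¹ * M) * e) * M⁻¹) := by
          rw [mul_assoc M e (M⁻¹ * M),
              InverseMonoid.idem_comm e (M⁻¹ * M) he (inv_mul_idem M)]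
      _ = (M⁻¹ * M * M⁻¹) * (M * (e * M⁻¹)) := by simp only [mul_assoc]
      _ = M⁻¹ * (M * (e * M⁻¹)) := by rw [inv_mul_self_mul]
      _ = (M⁻¹ * M) * e * M⁻¹ := by simp only [mul_assoc]
      _ = e * (M⁻¹ * M) * M⁻¹ := by
          rw [InverseMonoid.idem_comm (M⁻¹ * M) e (inv_mul_idem M) he]
      _ = e * (M⁻¹ * M * M⁻¹) := by simp only [mul_assoc]
      _ = e * M⁻¹ := by rw [inv_mul_self_mul]
      _ = (f x)⁻¹ := hfxinv.symm
  exact this.symm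

end Core
/-! #### Products of commuting idempotents -/

section IdemProd
variable {F : Type*} [InverseMonoid F] {α : Type*} {β : Type*}

/-- Product of a finite set of idempotents in an inverse monoid. -/
def idemProd (p : α → F) (hp : ∀ a, p a * p a = p a) (s : Finset α) : F :=
  s.noncommProd p (fun a _ b _ _ => InverseMonoid.idem_comm (p a) (p b) (hp a) (hp b))

lemma idemProd_empty (p : α → F) (hp) : idemProd p hp (∅ : Finset α) = 1 :=
  Finset.noncommProd_empty _ _

lemma idemProd_insert_of_not_mem [DecidableEq α] (p : α → F) (hp) {a : α} {s : Finset α}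
    (h : a ∉ s) : idemProd p hp (insert a s) = p a * idemProd p hp s :=
  Finset.noncommProd_insert_of_notMem _ _ _ _ h

lemma idemProd_absorb (p : α → F) (hp) {a : α} {s : Finset α} (h : a ∈ s) :
    p a * idemProd p hp s = idemProd p hp s := by
  classical
  induction s using Finset.induction_on with
  | empty => simp at h
  | @insert b s hb ih =>
    rw [idemProd_insert_of_not_mem p hp hb]
    rcases Finset.mem_insert.mp h with rfl | h'
    · rw [← mul_assoc, hp a]
    · rw [← mul_assoc, InverseMonoid.idem_comm (p a) (p b) (hp a) (hp b), mul_assoc, ih h']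

lemma idemProd_insert [DecidableEq α] (p : α → F) (hp) (a : α) (s : Finset α) :
    idemProd p hp (insert a s) = p a * idemProd p hp s := by
  by_cases h : a ∈ s
  · rw [Finset.insert_eq_self.mpr h, idemProd_absorb p hp h]
  · exact idemProd_insert_of_not_mem p hp h

lemma idemProd_singleton (p : α → F) (hp) (a : α) :
    idemProd p hp ({a} : Finset α) = p a :=
  Finset.noncommProd_singleton _ _

lemma idemProd_commute (p : α → F) (hp) (s : Finset α) (x : F) (hx : x * x = x) :
    x * idemProd p hp s = idemProd p hp s * x :=
  Finset.noncommProd_commute _ _ _ _ (fun a _ => InverseMonoid.idem_comm x (p a) hx (hp a))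

lemma idemProd_isIdem (p : α → F) (hp) (s : Finset α) :
    idemProd p hp s * idemProd p hp s = idemProd p hp s := by
  classical
  induction s using Finset.induction_on with
  | empty => rw [idemProd_empty]; exact one_mul 1
  | @insert b s hb ih =>
    rw [idemProd_insert p hp]
    have hc := idemProd_commute p hp s (p b) (hp b)
    calc p b * idemProd p hp s * (p b * idemProd p hp s)
        = p b * (idemProd p hp s * p b * idemProd p hp s) := by simp only [mul_assoc]
      _ = p b * (p b * idemProd p hp s * idemProd p hp s) := by rw [← hc]
      _ = (p b * p b) * (idemProd p hp s * idemProd p hp s) := by simp only [mul_assoc]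
      _ = p b * idemProd p hp s := by rw [hp b, ih]

lemma idemProd_union [DecidableEq α] (p : α → F) (hp) (s t : Finset α) :
    idemProd p hp (s ∪ t) = idemProd p hp s * idemProd p hp t := by
  induction s using Finset.induction_on with
  | empty => rw [Finset.empty_union, idemProd_empty, one_mul]
  | @insert b s hb ih =>
    rw [Finset.insert_union, idemProd_insert, idemProd_insert, ih, mul_assoc]

lemma idemProd_subset (p : α → F) (hp) {t : Finset α} :
    ∀ {s : Finset α}, s ⊆ t → idemProd p hp t * idemProd p hp s = idemProd p hp t := by
  classical
  intro s
  induction s using Finset.induction_on with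
  | empty => intro _; rw [idemProd_empty, mul_one]
  | @insert b s hb ih =>
    intro h
    have hb' : b ∈ t := h (Finset.mem_insert_self b s)
    have hs' : s ⊆ t := fun x hx => h (Finset.mem_insert_of_mem hx)
    rw [idemProd_insert p hp, ← mul_assoc, ← idemProd_commute p hp t (p b) (hp b),
        idemProd_absorb p hp hb', ih hs']

lemma idemProd_image [DecidableEq β] (p : β → F) (hp) (j : α → β) (s : Finset α) :
    idemProd p hp (s.image j) = idemProd (fun a => p (j a)) (fun a => hp (j a)) s := by
  classical
  induction s using Finset.induction_on with
  | empty => rw [Finset.image_empty, idemProd_empty, idemProd_empty]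
  | @insert b s hb ih =>
    rw [Finset.image_insert, idemProd_insert, idemProd_insert, ih]

lemma idemProd_conj (p : α → F) (hp) (q : α → F) (hq : ∀ a, q a * q a = q a) (c : F) :
    ∀ {s : Finset α}, (∀ i ∈ s, c * p i * c⁻¹ = q i * (c * c⁻¹)) →
      c * idemProd p hp s * c⁻¹ = idemProd q hq s * (c * c⁻¹) := by
  classical
  intro s
  induction s using Finset.induction_on with
  | empty => intro _; rw [idemProd_empty, idemProd_empty, mul_one, one_mul]
  | @insert b s hb ih =>
    intro hrel
    have h1 := hrel b (Finset.mem_insert_self b s)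
    have h2 := ih (fun i hi => hrel i (Finset.mem_insert_of_mem hi))
    rw [idemProd_insert p hp, idemProd_insert q hq,
        conj_mul_split c (hp b) (idemProd p hp s), h1, h2]
    -- goal: q b * (c*c⁻¹) * (idemProd q hq s * (c*c⁻¹)) = q b * idemProd q hq s * (c*c⁻¹)
    have hcomm : (c * c⁻¹) * idemProd q hq s = idemProd q hq s * (c * c⁻¹) :=
      idemProd_commute q hq s (c * c⁻¹) (mul_inv_idem c)
    calc q b * (c * c⁻¹) * (idemProd q hq s * (c * c⁻¹))
        = q b * ((c * c⁻¹) * idemProd q hq s) * (c * c⁻¹) := by simp only [mul_assoc]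
      _ = q b * (idemProd q hq s * (c * c⁻¹)) * (c * c⁻¹) := by rw [hcomm]
      _ = q b * idemProd q hq s * ((c * c⁻¹) * (c * c⁻¹)) := by simp only [mul_assoc]
      _ = q b * idemProd q hq s * (c * c⁻¹) := by rw [mul_inv_idem c]

lemma mul_mul_mul_comm' {a b c d : F} (h : b * c = c * b) :
    a * b * (c * d) = a * c * (b * d) := by
  rw [mul_assoc a b (c * d), ← mul_assoc b c d, h, mul_assoc c b d, ← mul_assoc a c (b * d)]

end IdemProd

/-! #### Finsets from finite sets -/

section FsOf
variable {β : Type*} {γ : Type*}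

open Classical in
/-- The finset of a set, empty if the set is infinite. -/
noncomputable def fsOf (s : Set β) : Finset β :=
  if h : s.Finite then h.toFinset else ∅

lemma mem_fsOf {s : Set β} (h : s.Finite) {a : β} : a ∈ fsOf s ↔ a ∈ s := by
  rw [fsOf, dif_pos h]
  exact Set.Finite.mem_toFinset h

lemma fsOf_union [DecidableEq β] {s t : Set β} (hs : s.Finite) (ht : t.Finite) :
    fsOf (s ∪ t) = fsOf s ∪ fsOf t := by
  ext a
  simp [mem_fsOf (hs.union ht), mem_fsOf hs, mem_fsOf ht]

lemma fsOf_image [DecidableEq γ] {s : Set β} (hs : s.Finite) (j : β → γ) :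
    fsOf (j '' s) = (fsOf s).image j := by
  ext a
  simp [mem_fsOf (hs.image j), mem_fsOf hs]

lemma fsOf_empty : fsOf (∅ : Set β) = ∅ := by
  ext a; simp [mem_fsOf (Set.finite_empty (α := β))]

lemma fsOf_singleton (a : β) : fsOf ({a} : Set β) = {a} := by
  ext b; simp [mem_fsOf (Set.finite_singleton a)]

lemma fsOf_pair [DecidableEq β] (a b : β) : fsOf ({a, b} : Set β) = insert a {b} := by
  ext c; simp [mem_fsOf ((Set.finite_singleton b).insert a)]

lemma fsOf_subset {s t : Set β} (hsub : s ⊆ t) (ht : t.Finite) : fsOf s ⊆ fsOf t := by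
  intro a ha
  rw [mem_fsOf (ht.subset hsub)] at ha
  rw [mem_fsOf ht]
  exact hsub ha

end FsOf
/-! #### The idempotent attached to a finite subgraph -/

section EG
variable {G : Type*} [Group G] {X : Type*} {F : Type*} [FInverseMonoid F]
variable {φ : X → G} (ν : G →* GQuot F) (f : X → F)

/-- The idempotent of `F` spanned by a finite subgraph of `Cay(G)`. -/
noncomputable def EGV (Γ : Subgraph φ) : F :=
  idemProd (PvV ν) (Pv_idem ν) (fsOf Γ.verts) *
    idemProd (QeV ν f) (Qe_idem ν f) (fsOf Γ.edges)

lemma EG_isIdem (Γ : Subgraph φ) : EGV ν f Γ * EGV ν f Γ = EGV ν f Γ := by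
  rw [EGV]
  rw [mul_mul_mul_comm' (idemProd_commute _ _ _ _ (idemProd_isIdem _ _ _)).symm,
      idemProd_isIdem, idemProd_isIdem]

lemma EG_union {Γ Δ : Subgraph φ} (hΓ : Γ.IsFinite) (hΔ : Δ.IsFinite) :
    EGV (φ := φ) ν f (Γ ∪ Δ) = EGV ν f Γ * EGV ν f Δ := by
  classical
  rw [EGV, EGV, EGV, Subgraph.union_verts, Subgraph.union_edges,
      fsOf_union hΓ.1 hΔ.1, fsOf_union hΓ.2 hΔ.2, idemProd_union, idemProd_union]
  exact mul_mul_mul_comm'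
    (InverseMonoid.idem_comm _ _ (idemProd_isIdem _ _ _) (idemProd_isIdem _ _ _))

lemma EG_absorbP {Γ : Subgraph φ} (hΓ : Γ.IsFinite) {v : G} (hv : v ∈ Γ.verts) :
    EGV ν f Γ * PvV ν v = EGV ν f Γ := by
  rw [EGV, mul_assoc,
      ← idemProd_commute (QeV ν f) (Qe_idem ν f) (fsOf Γ.edges) (PvV ν v) (Pv_idem ν v),
      ← mul_assoc,
      ← idemProd_commute (PvV ν) (Pv_idem ν) (fsOf Γ.verts) (PvV ν v) (Pv_idem ν v),
      idemProd_absorb (PvV ν) (Pv_idem ν) ((mem_fsOf hΓ.1).mpr hv)]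

lemma EG_mono {Γ Δ : Subgraph φ} (hΓ : Γ.IsFinite) (hsub : Δ ⊆ Γ) :
    EGV ν f Γ * EGV ν f Δ = EGV ν f Γ := by
  obtain ⟨hv, he⟩ := (Subgraph.subset_iff Δ Γ).mp hsub
  rw [EGV, EGV,
      mul_mul_mul_comm' (idemProd_commute _ _ _ _ (idemProd_isIdem _ _ _)).symm,
      idemProd_subset _ _ (fsOf_subset hv hΓ.1), idemProd_subset _ _ (fsOf_subset he hΓ.2)]

lemma EG_vertexG (g : G) : EGV ν f (vertexG φ g) = PvV ν g := by
  rw [EGV]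
  have h1 : (vertexG φ g).verts = {g} := rfl
  have h2 : (vertexG φ g).edges = ∅ := rfl
  rw [h1, h2, fsOf_singleton, fsOf_empty, idemProd_empty, mul_one]
  exact Finset.noncommProd_singleton _ _

lemma EG_edgeG (g : G) (x : X) :
    EGV ν f (edgeG φ (g, x)) = PvV ν g * PvV ν (g * φ x) * QeV ν f (g, x) := by
  classical
  rw [EGV]
  have h1 : (edgeG φ (g, x)).verts = {g, g * φ x} := rfl
  have h2 : (edgeG φ (g, x)).edges = {(g, x)} := rfl
  rw [h1, h2, fsOf_pair, fsOf_singleton, idemProd_insert,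
      idemProd_singleton, idemProd_singleton]

lemma EG_smul {Γ : Subgraph φ} (hΓ : Γ.IsFinite) (g : G) :
    MgV ν g * EGV ν f Γ * (MgV ν g)⁻¹ = EGV ν f (g • Γ) * PvV ν g := by
  classical
  set c := MgV (F := F) ν g with hc
  have hP : c * idemProd (PvV ν) (Pv_idem ν) (fsOf Γ.verts) * c⁻¹ =
      idemProd (fun v => PvV ν (g * v)) (fun v => Pv_idem ν (g * v)) (fsOf Γ.verts) *
        (c * c⁻¹) :=
    idemProd_conj _ _ _ _ c (fun i _ => Mg_conj_Pv ν g i)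
  have hQ : c * idemProd (QeV ν f) (Qe_idem ν f) (fsOf Γ.edges) * c⁻¹ =
      idemProd (fun e : G × X => QeV ν f (g * e.1, e.2))
        (fun e => Qe_idem ν f (g * e.1, e.2)) (fsOf Γ.edges) * (c * c⁻¹) :=
    idemProd_conj _ _ _ _ c (fun i _ => by
      have := Mg_conj_Qe ν f g i.1 i.2
      exact this)
  have hsplit : c * EGV ν f Γ * c⁻¹ =
      (c * idemProd (PvV ν) (Pv_idem ν) (fsOf Γ.verts) * c⁻¹) *
        (c * idemProd (QeV ν f) (Qe_idem ν f) (fsOf Γ.edges) * c⁻¹) := by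
    rw [EGV]
    exact conj_mul_split c (idemProd_isIdem _ _ _) _
  have hPv : (g • Γ).verts = (g * ·) '' Γ.verts := rfl
  have hQe : (g • Γ).edges = (fun e : G × X => (g * e.1, e.2)) '' Γ.edges := rfl
  have hPimg : idemProd (PvV ν) (Pv_idem ν) (fsOf (g • Γ).verts) =
      idemProd (fun v => PvV ν (g * v)) (fun v => Pv_idem ν (g * v)) (fsOf Γ.verts) := by
    rw [hPv, fsOf_image hΓ.1, idemProd_image]
  have hQimg : idemProd (QeV ν f) (Qe_idem ν f) (fsOf (g • Γ).edges) =
      idemProd (fun e : G × X => QeV ν f (g * e.1, e.2))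
        (fun e => Qe_idem ν f (g * e.1, e.2)) (fsOf Γ.edges) := by
    rw [hQe, fsOf_image hΓ.2, idemProd_image]
  rw [hsplit, hP, hQ, EGV, hPimg, hQimg]
  have hcomm : (c * c⁻¹) *
      idemProd (fun e : G × X => QeV ν f (g * e.1, e.2))
        (fun e => Qe_idem ν f (g * e.1, e.2)) (fsOf Γ.edges) =
      idemProd (fun e : G × X => QeV ν f (g * e.1, e.2))
        (fun e => Qe_idem ν f (g * e.1, e.2)) (fsOf Γ.edges) * (c * c⁻¹) :=
    idemProd_commute _ _ _ _ (mul_inv_idem c)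
  rw [mul_mul_mul_comm' hcomm, mul_inv_idem c, Pv_def ν g, ← hc]

lemma Mg_push {Γ : Subgraph φ} (hΓ : Γ.IsFinite) (g : G) :
    MgV ν g * EGV ν f Γ = EGV ν f (g • Γ) * MgV ν g := by
  rw [mul_idem_pull (MgV ν g) (EG_isIdem ν f Γ), EG_smul ν f hΓ g, mul_assoc, Pv_def,
      InverseMonoid.mul_inv_self_mul]

end EG

/-! #### Graph lemmas -/

section GraphLemmas
variable {G : Type*} [Group G] {X : Type*} {φ : X → G}

open Subgraph

lemma smul_union (g : G) (Γ Δ : Subgraph φ) : g • (Γ ∪ Δ) = g • Γ ∪ g • Δ := by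
  apply Subgraph.ext'
  · show (g * ·) '' (Γ.verts ∪ Δ.verts) = _
    rw [Set.image_union]; rfl
  · show (fun e : G × X => (g * e.1, e.2)) '' (Γ.edges ∪ Δ.edges) = _
    rw [Set.image_union]; rfl

lemma smul_vertexG (g h : G) : g • (vertexG φ h) = vertexG φ (g * h) := by
  apply Subgraph.ext'
  · show (g * ·) '' {h} = {g * h}
    rw [Set.image_singleton]
  · show (fun e : G × X => (g * e.1, e.2)) '' ∅ = ∅
    rw [Set.image_empty]

lemma smul_edgeG (g : G) (e : G × X) : g • (edgeG φ e) = edgeG φ (g * e.1, e.2) := by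
  apply Subgraph.ext'
  · show (g * ·) '' {e.1, e.1 * φ e.2} = {g * e.1, g * e.1 * φ e.2}
    rw [Set.image_insert_eq, Set.image_singleton, mul_assoc]
  · show (fun e' : G × X => (g * e'.1, e'.2)) '' {e} = {(g * e.1, e.2)}
    rw [Set.image_singleton]

lemma pathGraph_smul (u : List (X ⊕ X)) : ∀ (g h : G),
    pathGraph φ (g * h) u = g • pathGraph φ h u := by
  induction u with
  | nil => intro g h; simp only [pathGraph]; rw [smul_vertexG]
  | cons y u ih =>
    intro g h
    cases y with
    | inl x =>
      simp only [pathGraph]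
      rw [smul_union, smul_edgeG]
      dsimp only
      rw [mul_assoc g h (φ x), ih g (h * φ x)]
    | inr x =>
      simp only [pathGraph]
      rw [smul_union, smul_edgeG]
      dsimp only
      rw [mul_assoc g h ((φ x)⁻¹), ih g (h * (φ x)⁻¹)]

lemma pathGraph_base (g : G) (u : List (X ⊕ X)) :
    pathGraph φ g u = g • pathGraph φ 1 u := by
  have := pathGraph_smul (φ := φ) u g 1
  rwa [mul_one] at this

lemma journeyGraph_smul (l : List (List (X ⊕ X) × List (X ⊕ X))) :
    ∀ (u : List (X ⊕ X)) (g h : G),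
      journeyGraph φ (g * h) u l = g • journeyGraph φ h u l := by
  induction l with
  | nil => intro u g h; simp only [journeyGraph]; exact pathGraph_smul u g h
  | cons p l ih =>
    obtain ⟨v, u'⟩ := p
    intro u g h
    simp only [journeyGraph]
    rw [smul_union, pathGraph_smul u g h,
        show g * h * wordVal φ u * wordVal φ v
          = g * (h * wordVal φ u * wordVal φ v) by simp only [mul_assoc],
        ih u' g (h * wordVal φ u * wordVal φ v)]

lemma journeyGraph_base (g : G) (u : List (X ⊕ X)) (l : List (List (X ⊕ X) × List (X ⊕ X))) :
    journeyGraph φ g u l = g • journeyGraph φ 1 u l := by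
  have := journeyGraph_smul (φ := φ) l u g 1
  rwa [mul_one] at this

lemma vertexG_isFinite (g : G) : (vertexG φ g).IsFinite :=
  ⟨Set.finite_singleton g, Set.finite_empty⟩

lemma edgeG_isFinite (e : G × X) : (edgeG φ e).IsFinite :=
  ⟨(Set.finite_singleton _).insert _, Set.finite_singleton _⟩

lemma union_isFinite {Γ Δ : Subgraph φ} (h1 : Γ.IsFinite) (h2 : Δ.IsFinite) :
    (Γ ∪ Δ).IsFinite := ⟨h1.1.union h2.1, h1.2.union h2.2⟩

lemma smul_isFinite {Γ : Subgraph φ} (g : G) (h : Γ.IsFinite) : (g • Γ).IsFinite :=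
  ⟨h.1.image _, h.2.image _⟩

lemma pathGraph_isFinite (u : List (X ⊕ X)) : ∀ g : G, (pathGraph φ g u).IsFinite := by
  induction u with
  | nil => intro g; exact vertexG_isFinite g
  | cons y u ih =>
    intro g
    cases y with
    | inl x => exact union_isFinite (edgeG_isFinite _) (ih _)
    | inr x => exact union_isFinite (edgeG_isFinite _) (ih _)

lemma journeyGraph_isFinite (l : List (List (X ⊕ X) × List (X ⊕ X))) :
    ∀ (u : List (X ⊕ X)) (g : G), (journeyGraph φ g u l).IsFinite := by
  induction l with
  | nil => intro u g; exact pathGraph_isFinite u g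
  | cons p l ih =>
    obtain ⟨v, u'⟩ := p
    intro u g
    exact union_isFinite (pathGraph_isFinite u g) (ih u' _)

lemma start_mem_pathGraph (u : List (X ⊕ X)) : ∀ g : G, g ∈ (pathGraph φ g u).verts := by
  induction u with
  | nil => intro g; exact Set.mem_singleton g
  | cons y u ih =>
    intro g
    cases y with
    | inl x =>
      simp only [pathGraph, Subgraph.union_verts]
      exact Set.mem_union_left _ (Set.mem_insert g _)
    | inr x =>
      simp only [pathGraph, Subgraph.union_verts]
      refine Set.mem_union_left _ (Set.mem_insert_of_mem _ ?_)
      show g = g * (φ x)⁻¹ * φ x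
      rw [mul_assoc, inv_mul_cancel, mul_one]

lemma end_mem_pathGraph (u : List (X ⊕ X)) :
    ∀ g : G, g * wordVal φ u ∈ (pathGraph φ g u).verts := by
  induction u with
  | nil =>
    intro g
    show g * wordVal φ [] ∈ _
    rw [show wordVal φ ([] : List (X ⊕ X)) = 1 from rfl, mul_one]
    exact Set.mem_singleton g
  | cons y u ih =>
    intro g
    have hcons : wordVal φ (y :: u) = letterVal φ y * wordVal φ u := by
      simp [wordVal]
    cases y with
    | inl x =>
      simp only [pathGraph, Subgraph.union_verts]
      refine Set.mem_union_right _ ?_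
      have := ih (g * φ x)
      rwa [hcons, show letterVal φ (Sum.inl x) = φ x from rfl, ← mul_assoc]
    | inr x =>
      simp only [pathGraph, Subgraph.union_verts]
      refine Set.mem_union_right _ ?_
      have := ih (g * (φ x)⁻¹)
      rwa [hcons, show letterVal φ (Sum.inr x) = (φ x)⁻¹ from rfl, ← mul_assoc]

lemma start_mem_journeyGraph (u : List (X ⊕ X)) (l : List (List (X ⊕ X) × List (X ⊕ X)))
    (g : G) : g ∈ (journeyGraph φ g u l).verts := by
  cases l with
  | nil => exact start_mem_pathGraph u g
  | cons p l =>
    obtain ⟨v, u'⟩ := p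
    simp only [journeyGraph, Subgraph.union_verts]
    exact Set.mem_union_left _ (start_mem_pathGraph u g)

lemma termVal_cons {M : Type*} [Monoid M] [Inv M] (h : X → M) (mop : M → M)
    (u v u' : List (X ⊕ X)) (l : List (List (X ⊕ X) × List (X ⊕ X))) :
    termVal h mop (u, (v, u') :: l) =
      wordVal h u * mop (wordVal h v) * termVal h mop (u', l) := by
  simp only [termVal, List.map_cons, List.prod_cons, mul_assoc]

lemma termVal_nil {M : Type*} [Monoid M] [Inv M] (h : X → M) (mop : M → M)
    (u : List (X ⊕ X)) : termVal h mop (u, []) = wordVal h u := by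
  simp [termVal]

lemma end_mem_journeyGraph (l : List (List (X ⊕ X) × List (X ⊕ X))) :
    ∀ (u : List (X ⊕ X)) (g : G),
      g * termVal φ id (u, l) ∈ (journeyGraph φ g u l).verts := by
  induction l with
  | nil =>
    intro u g
    rw [termVal_nil]
    exact end_mem_pathGraph u g
  | cons p l ih =>
    obtain ⟨v, u'⟩ := p
    intro u g
    rw [termVal_cons]
    simp only [journeyGraph, Subgraph.union_verts, id_eq]
    refine Set.mem_union_right _ ?_
    have := ih u' (g * wordVal φ u * wordVal φ v)
    rwa [show g * wordVal φ u * wordVal φ v * termVal φ id (u', l)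
        = g * (wordVal φ u * wordVal φ v * termVal φ id (u', l)) by simp only [mul_assoc]]
      at this

lemma wordVal_nil' {M : Type*} [Monoid M] [Inv M] (h : X → M) :
    wordVal h ([] : List (X ⊕ X)) = 1 := rfl

lemma wordVal_cons' {M : Type*} [Monoid M] [Inv M] (h : X → M) (y : X ⊕ X)
    (u : List (X ⊕ X)) : wordVal h (y :: u) = letterVal h y * wordVal h u := by
  simp [wordVal]

end GraphLemmas
/-! #### The evaluation formula -/

section Eval
variable {G : Type*} [Group G] {X : Type*} {F : Type*} [FInverseMonoid F]
variable (φ : X → G) (ν : G →* GQuot F) (f : X → F)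

lemma σclass_letterVal (hν : ∀ x : X, ν (φ x) = σclass (f x)) (y : X ⊕ X) :
    σclass (letterVal f y) = ν (letterVal φ y) := by
  cases y with
  | inl x => exact (hν x).symm
  | inr x =>
    show σclass (f x)⁻¹ = ν (φ x)⁻¹
    rw [σclass_inv, map_inv, hν x]

lemma σclass_wordVal (hν : ∀ x : X, ν (φ x) = σclass (f x)) (u : List (X ⊕ X)) :
    σclass (wordVal f u) = ν (wordVal φ u) := by
  induction u with
  | nil =>
    show σclass (1 : F) = ν 1
    rw [map_one]; rfl
  | cons y u ih =>
    rw [wordVal_cons', wordVal_cons', σclass_mul, map_mul, ih, σclass_letterVal φ ν f hν]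

lemma mx_wordVal (hν : ∀ x : X, ν (φ x) = σclass (f x)) (u : List (X ⊕ X)) :
    mx (wordVal f u) = MgV ν (wordVal φ u) := by
  rw [MgV, ← σclass_wordVal φ ν f hν, Mq_mk]

/-- Abstract assembly computation used in the path induction. -/
lemma assembleF {F' : Type*} [InverseMonoid F']
    {e1 eΓ e2 m1 m2 m12 p q E : F'}
    (hpush : m1 * eΓ = e2 * m1)
    (hmul : m1 * m2 = p * q * m12)
    (hE : e1 * e2 = E)
    (hEp : E * p = E) (hEq : E * q = E) :
    e1 * m1 * (eΓ * m2) = E * m12 := by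
  calc e1 * m1 * (eΓ * m2)
      = e1 * (m1 * eΓ) * m2 := by simp only [mul_assoc]
    _ = e1 * (e2 * m1) * m2 := by rw [hpush]
    _ = (e1 * e2) * (m1 * m2) := by simp only [mul_assoc]
    _ = E * (p * q * m12) := by rw [hE, hmul]
    _ = (E * p) * q * m12 := by simp only [mul_assoc]
    _ = E * m12 := by rw [hEp, hEq]

lemma gen_inl (hν : ∀ x : X, ν (φ x) = σclass (f x)) (x : X) :
    f x = EGV ν f (edgeG φ (1, x)) * MgV ν (φ x) := by
  rw [EG_edgeG, Pv_one, one_mul, one_mul, Qe_one_fst]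
  exact gen_core_a ν f (hν x).symm

lemma gen_inr (hν : ∀ x : X, ν (φ x) = σclass (f x)) (x : X) :
    (f x)⁻¹ = EGV ν f (edgeG φ ((φ x)⁻¹, x)) * MgV ν (φ x)⁻¹ := by
  rw [EG_edgeG, inv_mul_cancel, Pv_one, mul_one]
  exact gen_core_b ν f (hν x).symm

/-- Claim C1: evaluation of a word of `I_X` in `F` via its path in `Cay(G)`. -/
lemma claimC1 (hν : ∀ x : X, ν (φ x) = σclass (f x)) (u : List (X ⊕ X)) :
    wordVal f u = EGV ν f (pathGraph φ 1 u) * MgV ν (wordVal φ u) := by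
  induction u with
  | nil =>
    show (1 : F) = EGV ν f (vertexG φ 1) * MgV ν (wordVal φ [])
    rw [EG_vertexG, Pv_one, wordVal_nil', Mg_one, one_mul]
  | cons y u ih =>
    cases y with
    | inl x =>
      rw [wordVal_cons', wordVal_cons']
      show f x * wordVal f u =
        EGV ν f (edgeG φ (1, x) ∪ pathGraph φ (1 * φ x) u) * MgV ν (φ x * wordVal φ u)
      rw [one_mul, pathGraph_base (φ x) u, gen_inl φ ν f hν x, ih,
          EG_union ν f (edgeG_isFinite _) (smul_isFinite _ (pathGraph_isFinite u 1))]
      refine assembleF (Mg_push ν f (pathGraph_isFinite u 1) (φ x))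
        (Mg_mul ν (φ x) (wordVal φ u)) rfl ?_ ?_
      · rw [← EG_union ν f (edgeG_isFinite _) (smul_isFinite _ (pathGraph_isFinite u 1))]
        refine EG_absorbP ν f
          (union_isFinite (edgeG_isFinite _) (smul_isFinite _ (pathGraph_isFinite u 1))) ?_
        rw [Subgraph.union_verts]
        refine Set.mem_union_right _ ?_
        refine ⟨wordVal φ u, ?_, rfl⟩
        have := end_mem_pathGraph (φ := φ) u 1
        rwa [one_mul] at this
      · rw [← EG_union ν f (edgeG_isFinite _) (smul_isFinite _ (pathGraph_isFinite u 1))]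
        refine EG_absorbP ν f
          (union_isFinite (edgeG_isFinite _) (smul_isFinite _ (pathGraph_isFinite u 1))) ?_
        rw [Subgraph.union_verts]
        refine Set.mem_union_left _ ?_
        show φ x ∈ ({(1 : G), 1 * φ x} : Set G)
        rw [one_mul]
        exact Set.mem_insert_of_mem _ rfl
    | inr x =>
      rw [wordVal_cons', wordVal_cons']
      show (f x)⁻¹ * wordVal f u =
        EGV ν f (edgeG φ (1 * (φ x)⁻¹, x) ∪ pathGraph φ (1 * (φ x)⁻¹) u) *
          MgV ν ((φ x)⁻¹ * wordVal φ u)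
      rw [one_mul, pathGraph_base ((φ x)⁻¹) u, gen_inr φ ν f hν x, ih,
          EG_union ν f (edgeG_isFinite _) (smul_isFinite _ (pathGraph_isFinite u 1))]
      refine assembleF (Mg_push ν f (pathGraph_isFinite u 1) ((φ x)⁻¹))
        (Mg_mul ν ((φ x)⁻¹) (wordVal φ u)) rfl ?_ ?_
      · rw [← EG_union ν f (edgeG_isFinite _) (smul_isFinite _ (pathGraph_isFinite u 1))]
        refine EG_absorbP ν f
          (union_isFinite (edgeG_isFinite _) (smul_isFinite _ (pathGraph_isFinite u 1))) ?_
        rw [Subgraph.union_verts]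
        refine Set.mem_union_right _ ?_
        refine ⟨wordVal φ u, ?_, rfl⟩
        have := end_mem_pathGraph (φ := φ) u 1
        rwa [one_mul] at this
      · rw [← EG_union ν f (edgeG_isFinite _) (smul_isFinite _ (pathGraph_isFinite u 1))]
        refine EG_absorbP ν f
          (union_isFinite (edgeG_isFinite _) (smul_isFinite _ (pathGraph_isFinite u 1))) ?_
        rw [Subgraph.union_verts]
        exact Set.mem_union_left _ (Set.mem_insert _ _)

/-- Abstract assembly computation used in the journey induction. -/
lemma assembleF2 {F' : Type*} [InverseMonoid F']
    {e1 eJ eJ2 E m1 m2 m3 m12 m123 p1 p2 p3 p4 : F'}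
    (h12 : m1 * m2 = p1 * p2 * m12)
    (hpush : m12 * eJ = eJ2 * m12)
    (h123 : m12 * m3 = p3 * p4 * m123)
    (hE : e1 * eJ2 = E)
    (hc1 : p1 * eJ2 = eJ2 * p1) (hc2 : p2 * eJ2 = eJ2 * p2)
    (hp1 : E * p1 = E) (hp2 : E * p2 = E) (hp3 : E * p3 = E) (hp4 : E * p4 = E) :
    e1 * m1 * m2 * (eJ * m3) = E * m123 := by
  calc e1 * m1 * m2 * (eJ * m3)
      = e1 * (m1 * m2) * (eJ * m3) := by simp only [mul_assoc]
    _ = e1 * (p1 * p2 * m12) * (eJ * m3) := by rw [h12]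
    _ = e1 * p1 * p2 * (m12 * eJ) * m3 := by simp only [mul_assoc]
    _ = e1 * p1 * p2 * (eJ2 * m12) * m3 := by rw [hpush]
    _ = e1 * p1 * (p2 * eJ2) * (m12 * m3) := by simp only [mul_assoc]
    _ = e1 * p1 * (eJ2 * p2) * (m12 * m3) := by rw [hc2]
    _ = e1 * (p1 * eJ2) * (p2 * (m12 * m3)) := by simp only [mul_assoc]
    _ = e1 * (eJ2 * p1) * (p2 * (m12 * m3)) := by rw [hc1]
    _ = (e1 * eJ2) * p1 * p2 * (m12 * m3) := by simp only [mul_assoc]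
    _ = E * p1 * p2 * (p3 * p4 * m123) := by rw [hE, h123]
    _ = (((E * p1) * p2) * p3) * p4 * m123 := by simp only [mul_assoc]
    _ = E * m123 := by rw [hp1, hp2, hp3, hp4]

/-- Claim C2: evaluation of a term of `I^m_X` in `F` via its journey in `Cay(G)`. -/
lemma claimC2 (hν : ∀ x : X, ν (φ x) = σclass (f x))
    (l : List (List (X ⊕ X) × List (X ⊕ X))) :
    ∀ u : List (X ⊕ X),
      termVal f mx (u, l) = EGV ν f (journeyGraph φ 1 u l) * MgV ν (termVal φ id (u, l)) := by
  induction l with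
  | nil =>
    intro u
    rw [termVal_nil, termVal_nil]
    exact claimC1 φ ν f hν u
  | cons p l ih =>
    obtain ⟨v, u'⟩ := p
    intro u
    rw [termVal_cons, termVal_cons]
    show wordVal f u * mx (wordVal f v) * termVal f mx (u', l) =
      EGV ν f (pathGraph φ 1 u ∪
        journeyGraph φ (1 * wordVal φ u * wordVal φ v) u' l) *
        MgV ν (wordVal φ u * id (wordVal φ v) * termVal φ id (u', l))
    rw [one_mul, id_eq, journeyGraph_base (wordVal φ u * wordVal φ v) u' l,
        claimC1 φ ν f hν u, mx_wordVal φ ν f hν v, ih u']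
    have hfinU : (pathGraph φ 1 u ∪
        (wordVal φ u * wordVal φ v) • journeyGraph φ 1 u' l).IsFinite :=
      union_isFinite (pathGraph_isFinite u 1)
        (smul_isFinite _ (journeyGraph_isFinite l u' 1))
    have habs : ∀ w : G, w ∈ (pathGraph φ 1 u ∪
        (wordVal φ u * wordVal φ v) • journeyGraph φ 1 u' l).verts →
        EGV ν f (pathGraph φ 1 u ∪
          (wordVal φ u * wordVal φ v) • journeyGraph φ 1 u' l) * PvV ν w =
        EGV ν f (pathGraph φ 1 u ∪
          (wordVal φ u * wordVal φ v) • journeyGraph φ 1 u' l) := by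
      intro w hw
      exact EG_absorbP ν f hfinU hw
    refine assembleF2 (Mg_mul ν (wordVal φ u) (wordVal φ v))
      (Mg_push ν f (journeyGraph_isFinite l u' 1) (wordVal φ u * wordVal φ v))
      (Mg_mul ν (wordVal φ u * wordVal φ v) (termVal φ id (u', l)))
      (EG_union ν f (pathGraph_isFinite u 1)
        (smul_isFinite _ (journeyGraph_isFinite l u' 1))).symm
      (InverseMonoid.idem_comm _ _ (Pv_idem ν _) (EG_isIdem ν f _))
      (InverseMonoid.idem_comm _ _ (Pv_idem ν _) (EG_isIdem ν f _))
      (habs _ ?_) (habs _ ?_) (habs _ ?_) (habs _ ?_)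
    · rw [Subgraph.union_verts]
      refine Set.mem_union_right _ ⟨1, start_mem_journeyGraph u' l 1, mul_one _⟩
    · rw [Subgraph.union_verts]
      refine Set.mem_union_left _ ?_
      have := end_mem_pathGraph (φ := φ) u 1
      rwa [one_mul] at this
    · rw [Subgraph.union_verts]
      refine Set.mem_union_right _ ⟨termVal φ id (u', l), ?_, rfl⟩
      have := end_mem_journeyGraph (φ := φ) l u' 1
      rwa [one_mul] at this
    · rw [Subgraph.union_verts]
      refine Set.mem_union_right _ ⟨1, start_mem_journeyGraph u' l 1, mul_one _⟩

end Eval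

end Aux12

/-- Let `G` be an `X`-generated group and `F` an `X`-generated F-inverse
monoid admitting a canonical morphism `ν : G → F/σ`.  If `s, t ∈ I^m_X` are terms with
`[s]_G = [t]_G` (so the journeys `j₁(s)`, `j₁(t)` are co-terminal) and the subgraph of
`Cay(G)` spanned by `j₁(s)` contains the one spanned by `j₁(t)`, then `[s]_F ≤ [t]_F` in
the natural partial order of `F`. -/
theorem statement12 {G : Type u} [Group G] {X : Type v} (φ : X → G)
    (hG : Subgroup.closure (Set.range φ) = ⊤)
    {F : Type w} [FInverseMonoid F] (f : X → F)
    (hF : ∀ T : Set F, (∀ x : X, f x ∈ T) → (1 : F) ∈ T →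
      (∀ a ∈ T, ∀ b ∈ T, a * b ∈ T) → (∀ a ∈ T, a⁻¹ ∈ T) → (∀ a ∈ T, mx a ∈ T) →
      ∀ s : F, s ∈ T)
    (ν : G →* GQuot F) (hν : ∀ x : X, ν (φ x) = σclass (f x))
    (s t : MTerm X)
    (hval : termVal φ id s = termVal φ id t)
    (hsub : journeyGraph φ 1 t.1 t.2 ⊆ journeyGraph φ 1 s.1 s.2) :
    nle (termVal f mx s) (termVal f mx t) := by
  obtain ⟨us, ls⟩ := s
  obtain ⟨ut, lt⟩ := t
  dsimp only at hval hsub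
  have hs := claimC2 φ ν f hν ls us
  have ht := claimC2 φ ν f hν lt ut
  rw [hval] at hs
  set M := MgV ν (termVal φ id (ut, lt)) with hM
  set Es := EGV ν f (journeyGraph φ 1 us ls) with hEs
  set Et := EGV ν f (journeyGraph φ 1 ut lt) with hEt
  have habs : Es * Et = Es :=
    EG_mono ν f (journeyGraph_isFinite ls us 1) hsub
  have hcomm : Et * Es = Es := by
    rw [InverseMonoid.idem_comm Et Es (EG_isIdem ν f _) (EG_isIdem ν f _), habs]
  refine ⟨M⁻¹ * Es * M, ?_, ?_⟩
  · have h := conj_idem M⁻¹ (EG_isIdem ν f (journeyGraph φ 1 us ls))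
    rwa [InverseMonoid.inv_inv, ← hEs] at h
  · rw [hs, ht]
    have key : Et * M * (M⁻¹ * Es * M) = Es * M := by
      calc Et * M * (M⁻¹ * Es * M)
          = Et * ((M * M⁻¹) * Es) * M := by simp only [mul_assoc]
        _ = Et * (Es * (M * M⁻¹)) * M := by
            rw [InverseMonoid.idem_comm (M * M⁻¹) Es (mul_inv_idem M) (EG_isIdem ν f _)]
        _ = (Et * Es) * (M * M⁻¹ * M) := by simp only [mul_assoc]
        _ = Es * M := by rw [hcomm, InverseMonoid.mul_inv_self_mul]
    exact key.symm

end FInvPaper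
end
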